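/- arXiv:1205.0023 — 4 statements merged into one kernel-verified Lean document; each statement's English description precedes it below -/
import Mathlib

section
/- Let m ≥ 3, let Λ ∈ ℝ^{m×m} be symmetric positive definite, let ȳ ∈ ℝ^m, and let Ω = {b ∈ ℝ^m : b_k − 2b_{k+1} + b_{k+2} ≥ 0 for k = 1,…,m−2}. A vector b̂ ∈ Ω is the (unique) minimizer over Ω of g(b) = (1/2)bᵀΛb − bᵀȳ if and only if the following hold: 0 ≤ D₂b̂ ⊥ C_{γ•}C(Λb̂ − ȳ) ≥ 0, where γ = {1,…,m−2}, and C_{m•}(Λb̂ − ȳ) = 0 and C_{m•}C(Λb̂ − ȳ) = 0. -/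
open Matrix

noncomputable section

/-- Second-order difference of a vector: `(D₂ b)_k = b_k - 2 b_{k+1} + b_{k+2}` (0-indexed). -/
def secondDiff {m : ℕ} (b : Fin m → ℝ) (i : Fin (m - 2)) : ℝ :=
  b ⟨i.val, by have := i.isLt; omega⟩ - 2 * b ⟨i.val + 1, by have := i.isLt; omega⟩
    + b ⟨i.val + 2, by have := i.isLt; omega⟩

/-- The objective function `g(b) = (1/2) bᵀ Λ b - bᵀ ȳ`. -/
def objFun {m : ℕ} (Lam : Matrix (Fin m) (Fin m) ℝ) (ybar b : Fin m → ℝ) : ℝ :=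
  (1 / 2) * (b ⬝ᵥ (Lam *ᵥ b)) - b ⬝ᵥ ybar

/-- The second-order difference matrix `D₂ ∈ ℝ^{(m-2)×m}`. -/
def D2 (m : ℕ) : Matrix (Fin (m - 2)) (Fin m) ℝ := fun k i =>
  if i.val = k.val then 1 else if i.val = k.val + 1 then -2
  else if i.val = k.val + 2 then 1 else 0

/-- The lower-triangular matrix of ones `C ∈ ℝ^{m×m}`. -/
def Cmat (m : ℕ) : Matrix (Fin m) (Fin m) ℝ := fun i j => if j ≤ i then 1 else 0

/-- The submatrix `C_{γ•}` of `C` consisting of the rows indexed by `γ = {1,…,m-2}`. -/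
def Cgam (m : ℕ) : Matrix (Fin (m - 2)) (Fin m) ℝ := fun k j =>
  Cmat m ⟨k.val, by have := k.isLt; omega⟩ j

namespace Stmt0Aux

open Finset


def U (s : ℕ → ℝ) (i : ℕ) : ℝ := ∑ j ∈ range (i+1), s j
def V (s : ℕ → ℝ) (i : ℕ) : ℝ := ∑ j ∈ range (i+1), U s j

def ext {m : ℕ} (s : Fin m → ℝ) : ℕ → ℝ := fun i => if h : i < m then s ⟨i, h⟩ else 0

lemma key_nat (s b : ℕ → ℝ) (n : ℕ) :
    ∑ i ∈ range (n+3), s i * b i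
      = U s (n+2) * b (n+2) - V s (n+1) * (b (n+2) - b (n+1))
        + ∑ k ∈ range (n+1), V s k * (b k - 2*b (k+1) + b (k+2)) := by
  induction n with
  | zero =>
      norm_num [U, V, Finset.sum_range_succ]
      ring
  | succ n ih =>
      have hU : U s (n+1+2) = U s (n+2) + s (n+3) := by
        unfold U
        rw [show n+1+2+1 = (n+3)+1 by omega, Finset.sum_range_succ,
            show n+2+1 = n+3 by omega]
      have hV : V s (n+1+1) = V s (n+1) + U s (n+2) := by
        unfold V
        rw [show n+1+1+1 = (n+2)+1 by omega, Finset.sum_range_succ,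
            show n+1+1 = n+2 by omega]
      rw [show n+1+3 = (n+3)+1 by omega, Finset.sum_range_succ]
      conv_rhs => rw [Finset.sum_range_succ]
      rw [ih, hU, hV, show n+1+2 = n+3 by omega, show n+1+1 = n+2 by omega]
      ring

lemma cmat_mulVec {m : ℕ} (w : Fin m → ℝ) (i : Fin m) :
    (Cmat m *ᵥ w) i = U (ext w) i.val := by
  have h1 : (Cmat m *ᵥ w) i = ∑ j : Fin m, (if (j:ℕ) ≤ (i:ℕ) then ext w (j:ℕ) else 0) := by
    simp only [Matrix.mulVec, dotProduct]
    apply Finset.sum_congr rfl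
    intro j _
    have h : ((j:ℕ) ≤ (i:ℕ)) = (j ≤ i) := by rw [eq_iff_iff]; exact (Fin.le_def).symm
    simp only [Cmat, ext, dif_pos j.isLt, ite_mul, one_mul, zero_mul, Fin.eta, h]
  rw [h1, Fin.sum_univ_eq_sum_range (fun j => if j ≤ (i:ℕ) then ext w j else 0) m]
  rw [U]
  rw [← Finset.sum_subset (Finset.range_subset_range.mpr (by omega : (i:ℕ)+1 ≤ m))
      (fun x hx hnx => if_neg (by simp at hx hnx ⊢; omega))]
  apply Finset.sum_congr rfl
  intro j hj
  exact if_pos (by simp at hj; omega)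

lemma v_eq {m : ℕ} (s : Fin m → ℝ) (i : Fin m) :
    (Cmat m *ᵥ (Cmat m *ᵥ s)) i = V (ext s) i.val := by
  rw [cmat_mulVec, U, V]
  apply Finset.sum_congr rfl
  intro j hj
  have hj' : j < m := by simp at hj; omega
  simp only [ext, dif_pos hj']
  rw [cmat_mulVec]

lemma cgam_mulVec {m : ℕ} (w : Fin m → ℝ) (k : Fin (m-2)) :
    (Cgam m *ᵥ w) k = (Cmat m *ᵥ w) ⟨k.val, by have := k.isLt; omega⟩ := rfl

lemma keyFin {m : ℕ} (hm : 3 ≤ m) (d s : Fin m → ℝ) :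
    d ⬝ᵥ s
      = (Cmat m *ᵥ s) ⟨m-1, Nat.sub_lt (by omega) one_pos⟩ * d ⟨m-1, Nat.sub_lt (by omega) one_pos⟩
        - (Cmat m *ᵥ (Cmat m *ᵥ s)) ⟨m-2, by omega⟩ * (d ⟨m-1, Nat.sub_lt (by omega) one_pos⟩ - d ⟨m-2, by omega⟩)
        + ∑ k : Fin (m-2), (Cgam m *ᵥ (Cmat m *ᵥ s)) k * secondDiff d k := by
  obtain ⟨n, rfl⟩ : ∃ n, m = n+3 := ⟨m-3, by omega⟩
  have hL : d ⬝ᵥ s = ∑ i ∈ range (n+3), ext s i * ext d i := by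
    rw [← Fin.sum_univ_eq_sum_range (fun i => ext s i * ext d i) (n+3)]
    apply Finset.sum_congr rfl
    intro i _
    simp only [ext, dif_pos i.isLt, Fin.eta]
    ring
  have e1 : (Cmat (n+3) *ᵥ s) ⟨n+3-1, by omega⟩ = U (ext s) (n+2) := by
    rw [cmat_mulVec]; congr 1
  have e2 : (Cmat (n+3) *ᵥ (Cmat (n+3) *ᵥ s)) ⟨n+3-2, by omega⟩ = V (ext s) (n+1) := by
    rw [v_eq]; congr 1
  have eb1 : (d ⟨n+3-1, by omega⟩ : ℝ) = ext d (n+2) := by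
    simp only [ext, dif_pos (show n+2 < n+3 by omega)]
    congr 1
  have eb2 : (d ⟨n+3-2, by omega⟩ : ℝ) = ext d (n+1) := by
    simp only [ext, dif_pos (show n+1 < n+3 by omega)]
    congr 1
  have e3 : ∑ k : Fin (n+3-2), (Cgam (n+3) *ᵥ (Cmat (n+3) *ᵥ s)) k * secondDiff d k
      = ∑ k ∈ range (n+1), V (ext s) k * (ext d k - 2 * ext d (k+1) + ext d (k+2)) := by
    have step : ∀ k : Fin (n+3-2),
        (Cgam (n+3) *ᵥ (Cmat (n+3) *ᵥ s)) k * secondDiff d k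
          = V (ext s) (k:ℕ) * (ext d (k:ℕ) - 2 * ext d ((k:ℕ)+1) + ext d ((k:ℕ)+2)) := by
      intro k
      have h0 : (k:ℕ) < n+3-2 := k.isLt
      have h1 : (k:ℕ) < n+3 := by omega
      have h2 : (k:ℕ)+1 < n+3 := by omega
      have h3 : (k:ℕ)+2 < n+3 := by omega
      rw [cgam_mulVec, v_eq]
      simp only [secondDiff, ext, dif_pos h1, dif_pos h2, dif_pos h3]
    rw [Finset.sum_congr rfl (fun k _ => step k),
        Fin.sum_univ_eq_sum_range (fun k => V (ext s) k * (ext d k - 2 * ext d (k+1) + ext d (k+2))) (n+3-2),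
        show n+3-2 = n+1 by omega]
  rw [hL, key_nat (ext s) (ext d) n, e1, e2, eb1, eb2, e3]

lemma d2_apply {m : ℕ} (b : Fin m → ℝ) (k : Fin (m-2)) :
    (D2 m *ᵥ b) k = secondDiff b k := by
  have h0 : (k:ℕ) < m-2 := k.isLt
  have h1 : (k:ℕ) < m := by omega
  have h2 : (k:ℕ)+1 < m := by omega
  have h3 : (k:ℕ)+2 < m := by omega
  have step : ∀ j : Fin m, D2 m k j * b j
      = (if j = ⟨(k:ℕ), h1⟩ then b j else 0)
        + (if j = ⟨(k:ℕ)+1, h2⟩ then (-2) * b j else 0)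
        + (if j = ⟨(k:ℕ)+2, h3⟩ then b j else 0) := by
    intro j
    simp only [D2, Fin.ext_iff]
    split_ifs <;> first | omega | ring
  show ∑ j : Fin m, D2 m k j * b j = _
  rw [Finset.sum_congr rfl (fun j _ => step j)]
  rw [Finset.sum_add_distrib, Finset.sum_add_distrib,
      Finset.sum_ite_eq' univ, Finset.sum_ite_eq' univ, Finset.sum_ite_eq' univ]
  simp [secondDiff]
  ring


lemma expand {m : ℕ} (Lam : Matrix (Fin m) (Fin m) ℝ) (hsym : Lam.IsSymm)
    (ybar b d : Fin m → ℝ) :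
    objFun Lam ybar (b + d)
      = objFun Lam ybar b + d ⬝ᵥ (Lam *ᵥ b - ybar) + (1/2) * (d ⬝ᵥ (Lam *ᵥ d)) := by
  have hbd : b ⬝ᵥ (Lam *ᵥ d) = d ⬝ᵥ (Lam *ᵥ b) := by
    rw [dotProduct_mulVec, ← mulVec_transpose, hsym.eq, dotProduct_comm]
  simp only [objFun, mulVec_add, dotProduct_add, add_dotProduct, dotProduct_sub]
  rw [hbd]; ring

lemma sd_add_smul {m : ℕ} (x y : Fin m → ℝ) (t : ℝ) (k : Fin (m-2)) :
    secondDiff (x + t • y) k = secondDiff x k + t * secondDiff y k := by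
  simp only [secondDiff, Pi.add_apply, Pi.smul_apply, smul_eq_mul]; ring

lemma sd_neg {m : ℕ} (x : Fin m → ℝ) (k : Fin (m-2)) :
    secondDiff (-x) k = - secondDiff x k := by
  simp only [secondDiff, Pi.neg_apply]; ring

lemma sd_sub {m : ℕ} (x y : Fin m → ℝ) (k : Fin (m-2)) :
    secondDiff (x - y) k = secondDiff x k - secondDiff y k := by
  simp only [secondDiff, Pi.sub_apply]; ring

lemma sd_one {m : ℕ} (k : Fin (m-2)) :
    secondDiff (fun _ : Fin m => (1:ℝ)) k = 0 := by
  simp only [secondDiff]; ring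

lemma sd_lin {m : ℕ} (k : Fin (m-2)) :
    secondDiff (fun i : Fin m => ((i:ℕ):ℝ)) k = 0 := by
  simp only [secondDiff]
  push_cast
  ring

def ramp (m : ℕ) (k : Fin (m-2)) : Fin m → ℝ := fun i => (((i:ℕ) - ((k:ℕ)+1) : ℕ) : ℝ)

lemma sd_ramp {m : ℕ} (k j : Fin (m-2)) :
    secondDiff (ramp m k) j = if j = k then 1 else 0 := by
  by_cases h : j = k
  · subst h
    have e1 : (j:ℕ) - ((j:ℕ)+1) = 0 := by omega
    have e2 : ((j:ℕ)+1) - ((j:ℕ)+1) = 0 := by omega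
    have e3 : ((j:ℕ)+2) - ((j:ℕ)+1) = 1 := by omega
    simp [secondDiff, ramp, e1, e2, e3]
  · rcases Nat.lt_or_ge (j:ℕ) (k:ℕ) with hlt | hge
    · have e1 : (j:ℕ) - ((k:ℕ)+1) = 0 := by omega
      have e2 : ((j:ℕ)+1) - ((k:ℕ)+1) = 0 := by omega
      have e3 : ((j:ℕ)+2) - ((k:ℕ)+1) = 0 := by omega
      simp [secondDiff, ramp, e1, e2, e3, h]
    · have hne : (j:ℕ) ≠ (k:ℕ) := fun hh => h (Fin.ext hh)
      have e2 : ((j:ℕ)+1) - ((k:ℕ)+1) = ((j:ℕ) - ((k:ℕ)+1)) + 1 := by omega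
      have e3 : ((j:ℕ)+2) - ((k:ℕ)+1) = ((j:ℕ) - ((k:ℕ)+1)) + 2 := by omega
      simp only [secondDiff, ramp, e2, e3, if_neg h]
      push_cast
      ring

lemma dirderiv {m : ℕ} (Lam : Matrix (Fin m) (Fin m) ℝ) (hsym : Lam.IsSymm)
    (hpd : Lam.PosDef) (ybar bhat : Fin m → ℝ)
    (hmin : ∀ b : Fin m → ℝ, (∀ k : Fin (m - 2), 0 ≤ secondDiff b k) →
        objFun Lam ybar bhat ≤ objFun Lam ybar b)
    (d : Fin m → ℝ)
    (hfeas : ∀ t : ℝ, 0 < t → t ≤ 1 → ∀ k : Fin (m-2), 0 ≤ secondDiff (bhat + t • d) k) :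
    0 ≤ d ⬝ᵥ (Lam *ᵥ bhat - ybar) := by
  by_contra hB
  push_neg at hB
  set A := d ⬝ᵥ (Lam *ᵥ d) with hA
  set B := d ⬝ᵥ (Lam *ᵥ bhat - ybar) with hBdef
  have hA0 : 0 ≤ A := by simpa using hpd.posSemidef.dotProduct_mulVec_nonneg d
  set t := min 1 (-B / (A+1)) with ht
  have htpos : 0 < t := lt_min one_pos (div_pos (neg_pos.mpr hB) (by linarith))
  have ht1 : t ≤ 1 := min_le_left _ _
  have hle := hmin (bhat + t • d) (hfeas t htpos ht1)
  have hexp := expand Lam hsym ybar bhat (t • d)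
  have h1 : (t • d) ⬝ᵥ (Lam *ᵥ bhat - ybar) = t * B := by
    rw [smul_dotProduct, smul_eq_mul]
  have h2 : (t • d) ⬝ᵥ (Lam *ᵥ (t • d)) = t * (t * A) := by
    rw [smul_dotProduct, mulVec_smul, dotProduct_smul, smul_eq_mul, smul_eq_mul]
  rw [h1, h2] at hexp
  have hq : 0 ≤ t * B + 1/2 * (t * (t * A)) := by
    rw [hexp] at hle; linarith
  have htub : t ≤ -B / (A+1) := min_le_right _ _
  have h3 : t * (A+1) ≤ -B := by
    rw [← le_div_iff₀ (by linarith : (0:ℝ) < A+1)]; exact htub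
  nlinarith [mul_le_mul_of_nonneg_left h3 htpos.le, mul_pos htpos htpos]

end Stmt0Aux

open Stmt0Aux Finset

/-- Theorem 2.1. Let `m ≥ 3`, let `Λ` be symmetric positive definite,
`ȳ ∈ ℝ^m`, and `Ω = {b : D₂ b ≥ 0}`.  A vector `b̂ ∈ Ω` minimizes
`g(b) = (1/2) bᵀ Λ b - bᵀ ȳ` over `Ω` if and only if
`0 ≤ D₂ b̂ ⊥ C_{γ•} C (Λ b̂ - ȳ) ≥ 0`, `C_{m•}(Λ b̂ - ȳ) = 0` and `C_{m•} C (Λ b̂ - ȳ) = 0`. -/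
theorem stmt0 (m : ℕ) (hm : 3 ≤ m)
    (Lam : Matrix (Fin m) (Fin m) ℝ) (hsym : Lam.IsSymm) (hpd : Lam.PosDef)
    (ybar : Fin m → ℝ) (bhat : Fin m → ℝ)
    (hmem : ∀ k : Fin (m - 2), 0 ≤ secondDiff bhat k) :
    (∀ b : Fin m → ℝ, (∀ k : Fin (m - 2), 0 ≤ secondDiff b k) →
        objFun Lam ybar bhat ≤ objFun Lam ybar b)
    ↔ ((∀ k : Fin (m - 2), 0 ≤ (D2 m *ᵥ bhat) k) ∧
       (∀ k : Fin (m - 2), 0 ≤ (Cgam m *ᵥ (Cmat m *ᵥ (Lam *ᵥ bhat - ybar))) k) ∧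
       (D2 m *ᵥ bhat) ⬝ᵥ (Cgam m *ᵥ (Cmat m *ᵥ (Lam *ᵥ bhat - ybar))) = 0 ∧
       (fun j => Cmat m ⟨m - 1, by omega⟩ j) ⬝ᵥ (Lam *ᵥ bhat - ybar) = 0 ∧
       (fun j => Cmat m ⟨m - 1, by omega⟩ j) ⬝ᵥ (Cmat m *ᵥ (Lam *ᵥ bhat - ybar)) = 0) := by
  have hm1 : m - 1 < m := by omega
  have hm2 : m - 2 < m := by omega
  set s : Fin m → ℝ := Lam *ᵥ bhat - ybar with hs
  have hsplit : (Cmat m *ᵥ (Cmat m *ᵥ s)) ⟨m-1, hm1⟩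
      = (Cmat m *ᵥ (Cmat m *ᵥ s)) ⟨m-2, hm2⟩ + (Cmat m *ᵥ s) ⟨m-1, hm1⟩ := by
    rw [v_eq, v_eq, cmat_mulVec]
    show V (ext s) (m-1) = V (ext s) (m-2) + U (ext s) (m-1)
    unfold V
    rw [show m-1+1 = (m-2+1)+1 by omega, Finset.sum_range_succ,
        show m-2+1 = m-1 by omega]
  constructor
  · intro hmin
    have hzero : ∀ d : Fin m → ℝ, (∀ k, secondDiff d k = 0) → d ⬝ᵥ s = 0 := by
      intro d hd
      have hp := dirderiv Lam hsym hpd ybar bhat hmin d (by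
        intro t _ _ k
        rw [sd_add_smul, hd k]
        simpa using hmem k)
      have hn := dirderiv Lam hsym hpd ybar bhat hmin (-d) (by
        intro t _ _ k
        rw [sd_add_smul, sd_neg, hd k]
        simpa using hmem k)
      rw [neg_dotProduct] at hn
      rw [← hs] at hp hn
      linarith
    have hu0 : (Cmat m *ᵥ s) ⟨m-1, hm1⟩ = 0 := by
      have h := hzero (fun _ => 1) (fun k => sd_one k)
      rw [keyFin hm (fun _ => 1) s] at h
      simpa [sd_one] using h
    have hv2 : (Cmat m *ᵥ (Cmat m *ᵥ s)) ⟨m-2, hm2⟩ = 0 := by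
      have h := hzero (fun i => ((i:ℕ):ℝ)) (fun k => sd_lin k)
      rw [keyFin hm (fun i => ((i:ℕ):ℝ)) s] at h
      simp only [sd_lin, mul_zero, Finset.sum_const_zero, add_zero, hu0, zero_mul,
        zero_sub, neg_eq_zero] at h
      have hcast : (((m-1 : ℕ):ℝ)) - ((m-2 : ℕ):ℝ) = 1 := by
        rw [show m-1 = (m-2)+1 by omega]
        push_cast
        ring
      rcases mul_eq_zero.mp h with h' | h'
      · exact h'
      · exfalso
        rw [hcast] at h'
        norm_num at h'
    have hv1 : (Cmat m *ᵥ (Cmat m *ᵥ s)) ⟨m-1, hm1⟩ = 0 := by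
      rw [hsplit, hv2, hu0, add_zero]
    have hcgam : ∀ k : Fin (m-2), 0 ≤ (Cgam m *ᵥ (Cmat m *ᵥ s)) k := by
      intro k
      have h := dirderiv Lam hsym hpd ybar bhat hmin (ramp m k) (by
        intro t ht _ j
        rw [sd_add_smul, sd_ramp]
        have := hmem j
        split_ifs <;> nlinarith)
      rw [← hs] at h
      rw [keyFin hm (ramp m k) s] at h
      simp only [sd_ramp, mul_ite, mul_one, mul_zero, Finset.sum_ite_eq',
        Finset.mem_univ, if_true, hu0, hv2, zero_mul, zero_sub, neg_zero, zero_add] at h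
      exact h
    have hbs : bhat ⬝ᵥ s = 0 := by
      have hp := dirderiv Lam hsym hpd ybar bhat hmin bhat (by
        intro t ht _ k
        rw [sd_add_smul]
        nlinarith [hmem k])
      have hn := dirderiv Lam hsym hpd ybar bhat hmin (-bhat) (by
        intro t ht ht1 k
        rw [sd_add_smul, sd_neg]
        nlinarith [hmem k])
      rw [neg_dotProduct] at hn
      rw [← hs] at hp hn
      linarith
    have hcomp : ∑ k : Fin (m-2), (Cgam m *ᵥ (Cmat m *ᵥ s)) k * secondDiff bhat k = 0 := by
      rw [keyFin hm bhat s] at hbs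
      rw [hu0, hv2] at hbs
      linarith
    refine ⟨fun k => by rw [d2_apply]; exact hmem k, hcgam, ?_, hu0, hv1⟩
    show ∑ k : Fin (m-2), (D2 m *ᵥ bhat) k * (Cgam m *ᵥ (Cmat m *ᵥ s)) k = 0
    rw [Finset.sum_congr rfl (fun k _ => by rw [d2_apply, mul_comm])]
    exact hcomp
  · rintro ⟨_, h2, h3, h4, h5⟩ b hb
    have hu0 : (Cmat m *ᵥ s) ⟨m-1, hm1⟩ = 0 := h4
    have hv1 : (Cmat m *ᵥ (Cmat m *ᵥ s)) ⟨m-1, hm1⟩ = 0 := h5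
    have hv2 : (Cmat m *ᵥ (Cmat m *ᵥ s)) ⟨m-2, hm2⟩ = 0 := by
      rw [hsplit, hu0, add_zero] at hv1
      exact hv1
    have hexp := expand Lam hsym ybar bhat (b - bhat)
    rw [add_sub_cancel] at hexp
    have hds : (b - bhat) ⬝ᵥ s
        = ∑ k : Fin (m-2), (Cgam m *ᵥ (Cmat m *ᵥ s)) k * secondDiff (b - bhat) k := by
      rw [keyFin hm (b - bhat) s, hu0, hv2]
      ring
    have hsum : ∑ k : Fin (m-2), (Cgam m *ᵥ (Cmat m *ᵥ s)) k * secondDiff (b - bhat) k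
        = (∑ k : Fin (m-2), (Cgam m *ᵥ (Cmat m *ᵥ s)) k * secondDiff b k)
          - ∑ k : Fin (m-2), (Cgam m *ᵥ (Cmat m *ᵥ s)) k * secondDiff bhat k := by
      rw [← Finset.sum_sub_distrib]
      apply Finset.sum_congr rfl
      intro k _
      rw [sd_sub]
      ring
    have hcomp : ∑ k : Fin (m-2), (Cgam m *ᵥ (Cmat m *ᵥ s)) k * secondDiff bhat k = 0 := by
      have h3' : ∑ k : Fin (m-2), (D2 m *ᵥ bhat) k * (Cgam m *ᵥ (Cmat m *ᵥ s)) k = 0 := h3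
      rw [← h3']
      apply Finset.sum_congr rfl
      intro k _
      rw [d2_apply, mul_comm]
    have hpos : 0 ≤ ∑ k : Fin (m-2), (Cgam m *ᵥ (Cmat m *ᵥ s)) k * secondDiff b k :=
      Finset.sum_nonneg (fun k _ => mul_nonneg (h2 k) (hb k))
    have hA : 0 ≤ (b - bhat) ⬝ᵥ (Lam *ᵥ (b - bhat)) := by simpa using hpd.posSemidef.dotProduct_mulVec_nonneg (b - bhat)
    rw [hexp, ← hs]
    linarith [hds, hsum, hcomp, hpos]

end
end

section
/- For each index set α ⊆ {1,…,K_n+p−2}, the matrix F_α ∈ ℝ^{ℓ×(K_n+p)} with ℓ = K_n+p−|α| has linearly independent rows and F_αΛF_αᵀ is positive definite; moreover, if b̂ is the minimizer of (1/2)bᵀΛb − bᵀȳ over Ω and α = {i : (D₂b̂)_i = 0}, then b̂ = F_αᵀ(F_αΛF_αᵀ)⁻¹F_αȳ. -/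
open Matrix

noncomputable section

/-- Extended knot sequence for degree-`p` B-splines with `K` equispaced interior intervals:
`t_i = 0` for `i ≤ p`, `t_{p+j} = j/K` for `0 ≤ j ≤ K`, `t_i = 1` for `i ≥ K + p`. -/
def knot (K p : ℕ) (i : ℕ) : ℝ := min 1 (max 0 (((i : ℝ) - p) / K))

/-- The B-spline `B_{i,q}` of degree `q` (Cox–de Boor recursion, with the convention that the
last nonempty knot interval is closed at `x = 1`); `Bspline K p q i x = B_{i,q}(x)`. -/
def Bspline (K p : ℕ) : ℕ → ℕ → ℝ → ℝ
  | 0, i, x =>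
      if knot K p i ≤ x ∧ (x < knot K p (i + 1) ∨ (x = 1 ∧ knot K p i < knot K p (i + 1))) then 1
      else 0
  | q + 1, i, x =>
      (x - knot K p i) / (knot K p (i + q + 1) - knot K p i) * Bspline K p q i x +
      (knot K p (i + q + 2) - x) / (knot K p (i + q + 2) - knot K p (i + 1)) * Bspline K p q (i + 1) x

/-- The design matrix `X = [B_k^{[p]}(x_i)]` at the design points `x_i = i/n`, `i = 1,…,n`. -/
def designX (n K p : ℕ) : Matrix (Fin n) (Fin (K + p)) ℝ := fun i k =>
  Bspline K p p k.val ((i.val + 1 : ℝ) / n)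

/-- `β_n = Σ_{i=1}^n (B_{p+1}^{[p]}(x_i))²`. -/
def betan (n K p : ℕ) : ℝ := ∑ i : Fin n, (Bspline K p p p ((i.val + 1 : ℝ) / n)) ^ 2

/-- `Λ = XᵀX / β_n`. -/
def Lam (n K p : ℕ) : Matrix (Fin (K + p)) (Fin (K + p)) ℝ :=
  (betan n K p)⁻¹ • ((designX n K p)ᵀ * designX n K p)

/-- The convex cone `Ω` of coefficient vectors with nonnegative second differences. -/
def cone (m : ℕ) : Set (Fin m → ℝ) := {b | ∀ i : Fin (m - 2), 0 ≤ secondDiff b i}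

/-- `ȳ = Xᵀ y / β_n` for a data vector `y ∈ ℝⁿ`. -/
def ybarOf (n K p : ℕ) (y : Fin n → ℝ) : Fin (K + p) → ℝ :=
  (betan n K p)⁻¹ • ((designX n K p)ᵀ *ᵥ y)

/-- `b` are the coefficients of the convex-constrained B-spline least squares fit to data `y`. -/
def isConstrainedLS (n K p : ℕ) (y : Fin n → ℝ) (b : Fin (K + p) → ℝ) : Prop :=
  b ∈ cone (K + p) ∧ ∀ b' ∈ cone (K + p),
    objFun (Lam n K p) (ybarOf n K p y) b ≤ objFun (Lam n K p) (ybarOf n K p y) b'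

/-- The spline function with coefficient vector `b`. -/
def splineFun (K p : ℕ) (b : Fin (K + p) → ℝ) (x : ℝ) : ℝ :=
  ∑ k : Fin (K + p), b k * Bspline K p p k.val x

/-- The free (breakpoint) coordinates determined by the active set `α`: coordinate `t` is free
iff it is not the middle coordinate of an active second-difference constraint. -/
def freeSet (m : ℕ) (α : Finset (Fin (m - 2))) : Finset (Fin m) :=
  Finset.univ.filter fun t => ∀ i ∈ α, t.val ≠ i.val + 1

/-- The `j`-th free coordinate, in increasing order (`= m` out of range). -/
def freeIdx (m : ℕ) (α : Finset (Fin (m - 2))) (j : ℕ) : ℕ :=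
  if h : j < (freeSet m α).card then (((freeSet m α).orderIsoOfFin rfl) ⟨j, h⟩).1.1 else m

/-- The interpolation matrix `F_α ∈ ℝ^{ℓ×m}`, `ℓ = m - |α|`: its `j`-th row is the
piecewise-linear hat function on the grid of free coordinates which equals `1` at the `j`-th
free coordinate and `0` at all other free coordinates, so that `b = F_αᵀ b̃` recovers a vector
satisfying the active constraints from its free values `b̃`. -/
def Fmat (m : ℕ) (α : Finset (Fin (m - 2))) : Matrix (Fin (freeSet m α).card) (Fin m) ℝ :=
  fun j t =>
    if t.val = freeIdx m α j.val then 1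
    else if freeIdx m α j.val < t.val ∧ t.val < freeIdx m α (j.val + 1) then
      ((freeIdx m α (j.val + 1) : ℝ) - (t.val : ℝ)) /
        ((freeIdx m α (j.val + 1) : ℝ) - (freeIdx m α j.val : ℝ))
    else if 0 < j.val ∧ freeIdx m α (j.val - 1) < t.val ∧ t.val < freeIdx m α j.val then
      ((t.val : ℝ) - (freeIdx m α (j.val - 1) : ℝ)) /
        ((freeIdx m α j.val : ℝ) - (freeIdx m α (j.val - 1) : ℝ))
    else 0

section Aux
variable {m : ℕ} {α : Finset (Fin (m - 2))}

lemma mem_freeSet {t : Fin m} : t ∈ freeSet m α ↔ ∀ i ∈ α, t.val ≠ i.val + 1 := by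
  simp [freeSet]

lemma card_freeSet' : (freeSet m α).card = m - α.card := by
  have hφ : Function.Injective (fun i : Fin (m-2) => (⟨i.val + 1, by omega⟩ : Fin m)) := by
    intro a b h
    have := congrArg Fin.val h
    simp at this
    exact Fin.ext this
  have : freeSet m α = Finset.univ \ α.image (fun i : Fin (m-2) => (⟨i.val + 1, by omega⟩ : Fin m)) := by
    ext t
    simp [mem_freeSet, Fin.ext_iff, eq_comm]
  rw [this, Finset.card_sdiff_of_subset (Finset.subset_univ _), Finset.card_image_of_injective _ hφ]
  simp

lemma freeIdx_lt {j : ℕ} (h : j < (freeSet m α).card) : freeIdx m α j < m := by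
  unfold freeIdx
  rw [dif_pos h]
  exact ((((freeSet m α).orderIsoOfFin rfl) ⟨j, h⟩)).1.isLt

lemma freeIdx_of_ge {j : ℕ} (h : ¬ j < (freeSet m α).card) : freeIdx m α j = m := dif_neg h

lemma freeIdx_mem {j : ℕ} (h : j < (freeSet m α).card) :
    (⟨freeIdx m α j, freeIdx_lt h⟩ : Fin m) ∈ freeSet m α := by
  unfold freeIdx
  simp only [dif_pos h]
  exact ((((freeSet m α).orderIsoOfFin rfl) ⟨j, h⟩)).2

lemma freeIdx_strictMono {j j' : ℕ} (h : j < j') (h' : j' < (freeSet m α).card) :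
    freeIdx m α j < freeIdx m α j' := by
  have hj : j < (freeSet m α).card := h.trans h'
  unfold freeIdx
  rw [dif_pos hj, dif_pos h']
  exact ((freeSet m α).orderIsoOfFin rfl).strictMono (show (⟨j, hj⟩ : Fin _) < ⟨j', h'⟩ from h)

lemma freeIdx_mono {j j' : ℕ} (h : j ≤ j') : freeIdx m α j ≤ freeIdx m α j' := by
  by_cases h' : j' < (freeSet m α).card
  · rcases eq_or_lt_of_le h with rfl | hlt
    · exact le_refl _
    · exact (freeIdx_strictMono hlt h').le
  · rw [freeIdx_of_ge h']
    by_cases hj : j < (freeSet m α).card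
    · exact (freeIdx_lt hj).le
    · rw [freeIdx_of_ge hj]

lemma lt_of_freeIdx_lt {j j' : ℕ} (h : freeIdx m α j < freeIdx m α j') : j < j' := by
  by_contra hc
  exact absurd (freeIdx_mono (not_lt.mp hc)) (not_le.mpr h)

lemma exists_freeIdx {t : Fin m} (ht : t ∈ freeSet m α) :
    ∃ j < (freeSet m α).card, freeIdx m α j = t.val := by
  refine ⟨(((freeSet m α).orderIsoOfFin rfl).symm ⟨t, ht⟩).val,
    (((freeSet m α).orderIsoOfFin rfl).symm ⟨t, ht⟩).isLt, ?_⟩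
  unfold freeIdx
  rw [dif_pos]
  congr 1
  have : (⟨(((freeSet m α).orderIsoOfFin rfl).symm ⟨t, ht⟩).val, _⟩ : Fin (freeSet m α).card)
      = (((freeSet m α).orderIsoOfFin rfl).symm ⟨t, ht⟩) := rfl
  rw [this, OrderIso.apply_symm_apply]
  exact (((freeSet m α).orderIsoOfFin rfl).symm ⟨t, ht⟩).isLt

lemma zero_mem_freeSet (hm : 0 < m) : (⟨0, hm⟩ : Fin m) ∈ freeSet m α := by
  rw [mem_freeSet]; intro i _; show (0:ℕ) ≠ i.val + 1; omega

lemma last_mem_freeSet (hm : 0 < m) : (⟨m - 1, by omega⟩ : Fin m) ∈ freeSet m α := by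
  rw [mem_freeSet]; intro i _; show m - 1 ≠ i.val + 1; have := i.isLt; omega

lemma card_freeSet_pos (hm : 0 < m) : 0 < (freeSet m α).card :=
  Finset.card_pos.mpr ⟨_, zero_mem_freeSet hm⟩

lemma freeIdx_zero (hm : 0 < m) : freeIdx m α 0 = 0 := by
  obtain ⟨j, hj, he⟩ := exists_freeIdx (zero_mem_freeSet (α := α) hm)
  have he' : freeIdx m α j = 0 := he
  have := freeIdx_mono (α := α) (Nat.zero_le j)
  omega

lemma freeIdx_last (hm : 0 < m) : freeIdx m α ((freeSet m α).card - 1) = m - 1 := by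
  obtain ⟨j, hj, he⟩ := exists_freeIdx (last_mem_freeSet (α := α) hm)
  have he' : freeIdx m α j = m - 1 := he
  rcases eq_or_lt_of_le (Nat.le_sub_one_of_lt hj) with rfl | hlt
  · omega
  · have h1 := freeIdx_strictMono (α := α) hlt (by omega)
    have h2 := freeIdx_lt (α := α) (show (freeSet m α).card - 1 < (freeSet m α).card by omega)
    omega

lemma not_free_between {j : ℕ} (hj : j < (freeSet m α).card) {t : Fin m}
    (h1 : freeIdx m α j < t.val) (h2 : t.val < freeIdx m α (j + 1)) : t ∉ freeSet m α := by
  intro ht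
  obtain ⟨j', hj', he⟩ := exists_freeIdx ht
  have he' : freeIdx m α j' = t.val := he
  have hlt : j < j' := lt_of_freeIdx_lt (show freeIdx m α j < freeIdx m α j' by omega)
  have := freeIdx_mono (α := α) (show j + 1 ≤ j' by omega)
  omega


lemma exists_between_free {t : Fin m} (ht : t ∉ freeSet m α) :
    ∃ j, j + 1 < (freeSet m α).card ∧ freeIdx m α j < t.val ∧ t.val < freeIdx m α (j + 1) ∧
      (∀ k, freeIdx m α k < t.val → k ≤ j) := by
  have hm : 0 < m := t.pos
  have hcard := card_freeSet_pos (α := α) hm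
  have ht0 : t.val ≠ 0 := by
    intro h0
    exact ht (by rw [show t = ⟨0, hm⟩ from Fin.ext h0]; exact zero_mem_freeSet hm)
  have htl : t.val ≠ m - 1 := by
    intro h0
    exact ht (by rw [show t = ⟨m - 1, by omega⟩ from Fin.ext h0]; exact last_mem_freeSet hm)
  set P : ℕ → Prop := fun k => freeIdx m α k < t.val with hP
  have hP0 : P 0 := by
    simp only [hP, freeIdx_zero (α := α) hm]
    omega
  set j := Nat.findGreatest P (freeSet m α).card with hj
  have hPj : P j := Nat.findGreatest_spec (Nat.zero_le _) hP0
  have hjle : j ≤ (freeSet m α).card := Nat.findGreatest_le _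
  have hgt : ∀ k, j < k → k ≤ (freeSet m α).card → ¬ P k := fun k h1 h2 =>
    Nat.findGreatest_is_greatest h1 h2
  have hmax : ∀ k, freeIdx m α k < t.val → k ≤ j := by
    intro k hk
    by_contra hc
    by_cases hkc : k ≤ (freeSet m α).card
    · exact hgt k (by omega) hkc hk
    · have : freeIdx m α k = m := freeIdx_of_ge (by omega)
      have := t.isLt
      omega
  have hjne : j ≠ (freeSet m α).card := by
    intro h
    have : freeIdx m α j = m := freeIdx_of_ge (by omega)
    have := t.isLt
    simp only [hP] at hPj
    omega
  have hjne2 : j ≠ (freeSet m α).card - 1 := by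
    intro h
    have : freeIdx m α j = m - 1 := by rw [h]; exact freeIdx_last hm
    have := t.isLt
    simp only [hP] at hPj
    omega
  have hj1 : j + 1 < (freeSet m α).card := by omega
  have hnP : ¬ P (j + 1) := hgt _ (by omega) (by omega)
  simp only [hP] at hPj hnP
  have hne : t.val ≠ freeIdx m α (j + 1) := by
    intro h
    have ht' : t = ⟨freeIdx m α (j+1), freeIdx_lt hj1⟩ := Fin.ext h
    rw [ht'] at ht
    exact ht (freeIdx_mem hj1)
  exact ⟨j, hj1, hPj, by omega, hmax⟩

lemma Fmat_apply_free {j : Fin (freeSet m α).card} {j' : ℕ} (hj' : j' < (freeSet m α).card) :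
    Fmat m α j ⟨freeIdx m α j', freeIdx_lt hj'⟩ = if j.val = j' then 1 else 0 := by
  by_cases hjj : j.val = j'
  · rw [if_pos hjj, Fmat, if_pos (by simp [hjj])]
  · rw [if_neg hjj, Fmat]
    rw [if_neg, if_neg, if_neg]
    · rintro ⟨hj0, hb1, hb2⟩
      have hlt : j.val - 1 < (freeSet m α).card := by have := j.isLt; omega
      have hb2' : freeIdx m α j' < freeIdx m α (j.val - 1 + 1) := by
        rw [Nat.sub_add_cancel hj0]; exact hb2
      exact not_free_between hlt (t := ⟨freeIdx m α j', freeIdx_lt hj'⟩) hb1 hb2'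
        (freeIdx_mem hj')
    · rintro ⟨hb1, hb2⟩
      exact not_free_between j.isLt (t := ⟨freeIdx m α j', freeIdx_lt hj'⟩) hb1 hb2
        (freeIdx_mem hj')
    · intro h
      have h' : freeIdx m α j' = freeIdx m α j.val := h
      rcases lt_trichotomy j.val j' with hl | he | hl
      · exact absurd (freeIdx_strictMono hl hj') (by omega)
      · exact hjj he
      · exact absurd (freeIdx_strictMono hl j.isLt) (by omega)

lemma Fmat_apply_between {j : ℕ} (hj : j + 1 < (freeSet m α).card) {t : Fin m}
    (h1 : freeIdx m α j < t.val) (h2 : t.val < freeIdx m α (j + 1))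
    (hmax : ∀ k, freeIdx m α k < t.val → k ≤ j) (j' : Fin (freeSet m α).card) :
    Fmat m α j' t =
      if j'.val = j then
        ((freeIdx m α (j+1) : ℝ) - (t.val : ℝ)) / ((freeIdx m α (j+1) : ℝ) - (freeIdx m α j : ℝ))
      else if j'.val = j + 1 then
        ((t.val : ℝ) - (freeIdx m α j : ℝ)) / ((freeIdx m α (j+1) : ℝ) - (freeIdx m α j : ℝ))
      else 0 := by
  have htf : t ∉ freeSet m α := not_free_between (by omega) h1 h2
  by_cases hc1 : j'.val = j
  · rw [if_pos hc1]
    simp only [Fmat, hc1]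
    rw [if_neg (by omega), if_pos ⟨h1, h2⟩]
  · rw [if_neg hc1]
    by_cases hc2 : j'.val = j + 1
    · rw [if_pos hc2]
      simp only [Fmat, hc2, Nat.add_sub_cancel]
      rw [if_neg (by omega), if_neg, if_pos ⟨Nat.succ_pos j, h1, h2⟩]
      rintro ⟨hb1, hb2⟩
      have := hmax _ hb1
      omega
    · rw [if_neg hc2, Fmat]
      rw [if_neg, if_neg, if_neg]
      · rintro ⟨hj0, hb1, hb2⟩
        have hk1 : j'.val - 1 ≤ j := hmax _ hb1
        have hk2 : ¬ (j'.val ≤ j) := by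
          intro hle
          have := freeIdx_mono (α := α) hle
          omega
        omega
      · rintro ⟨hb1, hb2⟩
        have hk1 : j'.val ≤ j := hmax _ hb1
        have : freeIdx m α (j'.val + 1) ≤ freeIdx m α j :=
          freeIdx_mono (show j'.val + 1 ≤ j by omega)
        omega
      · intro h
        have ht' : t = ⟨freeIdx m α j'.val, freeIdx_lt j'.isLt⟩ := Fin.ext h
        rw [ht'] at htf
        exact htf (freeIdx_mem j'.isLt)


lemma mulVecT_free (x : Fin (freeSet m α).card → ℝ) {j' : ℕ} (hj' : j' < (freeSet m α).card) :
    ((Fmat m α)ᵀ *ᵥ x) ⟨freeIdx m α j', freeIdx_lt hj'⟩ = x ⟨j', hj'⟩ := by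
  rw [Matrix.mulVec, dotProduct]
  rw [Finset.sum_eq_single (⟨j', hj'⟩ : Fin (freeSet m α).card)]
  · rw [Matrix.transpose_apply, Fmat_apply_free hj', if_pos rfl, one_mul]
  · intro b _ hb
    rw [Matrix.transpose_apply, Fmat_apply_free hj', if_neg (fun h => hb (Fin.ext h)), zero_mul]
  · intro h
    exact absurd (Finset.mem_univ _) h

lemma mulVecT_between (x : Fin (freeSet m α).card → ℝ) {j : ℕ}
    (hj : j + 1 < (freeSet m α).card) {t : Fin m}
    (h1 : freeIdx m α j < t.val) (h2 : t.val < freeIdx m α (j + 1))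
    (hmax : ∀ k, freeIdx m α k < t.val → k ≤ j) :
    ((Fmat m α)ᵀ *ᵥ x) t = x ⟨j, by omega⟩ + (x ⟨j + 1, hj⟩ - x ⟨j, by omega⟩) *
      (((t.val : ℝ) - (freeIdx m α j : ℝ)) / ((freeIdx m α (j+1) : ℝ) - (freeIdx m α j : ℝ))) := by
  have hlt : freeIdx m α j < freeIdx m α (j + 1) := freeIdx_strictMono (by omega) hj
  have hne : ((freeIdx m α (j+1) : ℝ) - (freeIdx m α j : ℝ)) ≠ 0 := by
    have : (freeIdx m α j : ℝ) < (freeIdx m α (j+1) : ℝ) := by exact_mod_cast hlt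
    linarith
  rw [Matrix.mulVec, dotProduct]
  have hsub : ({⟨j, by omega⟩, ⟨j + 1, hj⟩} : Finset (Fin (freeSet m α).card)) ⊆ Finset.univ :=
    Finset.subset_univ _
  rw [← Finset.sum_subset hsub]
  · rw [Finset.sum_pair (by simp [Fin.ext_iff])]
    simp only [Matrix.transpose_apply]
    rw [Fmat_apply_between hj h1 h2 hmax, Fmat_apply_between hj h1 h2 hmax]
    rw [if_pos rfl, if_neg (show ¬ (j + 1 = j) by omega), if_pos rfl]
    field_simp
    ring
  · intro b _ hb
    rw [Matrix.transpose_apply, Fmat_apply_between hj h1 h2 hmax]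
    simp only [Finset.mem_insert, Finset.mem_singleton] at hb
    push_neg at hb
    rw [if_neg (fun h => hb.1 (Fin.ext h)), if_neg (fun h => hb.2 (Fin.ext h)), zero_mul]

lemma mulVecT_affine (x : Fin (freeSet m α).card → ℝ) {j : ℕ}
    (hj : j + 1 < (freeSet m α).card) {s : Fin m}
    (h1 : freeIdx m α j ≤ s.val) (h2 : s.val ≤ freeIdx m α (j + 1)) :
    ((Fmat m α)ᵀ *ᵥ x) s = x ⟨j, by omega⟩ + (x ⟨j + 1, hj⟩ - x ⟨j, by omega⟩) *
      (((s.val : ℝ) - (freeIdx m α j : ℝ)) / ((freeIdx m α (j+1) : ℝ) - (freeIdx m α j : ℝ))) := by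
  have hlt : freeIdx m α j < freeIdx m α (j + 1) := freeIdx_strictMono (by omega) hj
  have hne : ((freeIdx m α (j+1) : ℝ) - (freeIdx m α j : ℝ)) ≠ 0 := by
    have : (freeIdx m α j : ℝ) < (freeIdx m α (j+1) : ℝ) := by exact_mod_cast hlt
    linarith
  by_cases hs : s ∈ freeSet m α
  · obtain ⟨j'', hj'', he⟩ := exists_freeIdx hs
    have hle1 : j ≤ j'' := by
      by_contra hc
      have := freeIdx_strictMono (α := α) (show j'' < j by omega) (by omega)
      omega
    have hle2 : j'' ≤ j + 1 := by
      by_contra hc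
      have := freeIdx_strictMono (α := α) (show j + 1 < j'' by omega) hj''
      omega
    have hs' : s = ⟨freeIdx m α j'', freeIdx_lt hj''⟩ := Fin.ext he.symm
    rcases (show j'' = j ∨ j'' = j + 1 by omega) with rfl | rfl
    · rw [hs', mulVecT_free x hj'']
      simp
    · rw [hs', mulVecT_free x hj'']
      simp [div_self hne]
  · obtain ⟨j₂, hj₂, hb1, hb2, hmax₂⟩ := exists_between_free hs
    have hsj : freeIdx m α j < s.val := by
      rcases eq_or_lt_of_le h1 with he | hlt'
      · exfalso
        have hs' : s = ⟨freeIdx m α j, freeIdx_lt (by omega)⟩ := Fin.ext he.symm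
        rw [hs'] at hs
        exact hs (freeIdx_mem (by omega))
      · exact hlt'
    have hsj2 : s.val < freeIdx m α (j + 1) := by
      rcases eq_or_lt_of_le h2 with he | hlt'
      · exfalso
        have hs' : s = ⟨freeIdx m α (j+1), freeIdx_lt hj⟩ := Fin.ext he
        rw [hs'] at hs
        exact hs (freeIdx_mem hj)
      · exact hlt'
    have hjj : j₂ = j := by
      have l1 : j ≤ j₂ := hmax₂ _ hsj
      have l2 : j₂ < j + 1 := by
        by_contra hc
        have := freeIdx_mono (α := α) (show j + 1 ≤ j₂ by omega)
        omega
      omega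
    subst hjj
    exact mulVecT_between x hj₂ hb1 hb2 hmax₂


lemma secondDiff_mulVecT (x : Fin (freeSet m α).card → ℝ) {i : Fin (m - 2)} (hi : i ∈ α) :
    secondDiff ((Fmat m α)ᵀ *ᵥ x) i = 0 := by
  have him : i.val + 1 < m := by have := i.isLt; omega
  have htf : (⟨i.val + 1, him⟩ : Fin m) ∉ freeSet m α := by
    intro h
    exact mem_freeSet.mp h i hi rfl
  obtain ⟨j, hj, hb1, hb2, hmax⟩ := exists_between_free htf
  have hb1' : freeIdx m α j < i.val + 1 := hb1
  have hb2' : i.val + 1 < freeIdx m α (j + 1) := hb2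
  have e0 := mulVecT_affine (α := α) x hj (s := ⟨i.val, by omega⟩)
    (show freeIdx m α j ≤ i.val by omega) (show i.val ≤ freeIdx m α (j+1) by omega)
  have e1 := mulVecT_affine (α := α) x hj (s := ⟨i.val + 1, him⟩)
    (show freeIdx m α j ≤ i.val + 1 by omega) (show i.val + 1 ≤ freeIdx m α (j+1) by omega)
  have e2 := mulVecT_affine (α := α) x hj (s := ⟨i.val + 2, by have := i.isLt; omega⟩)
    (show freeIdx m α j ≤ i.val + 2 by omega) (show i.val + 2 ≤ freeIdx m α (j+1) by omega)
  have hlt : freeIdx m α j < freeIdx m α (j + 1) := freeIdx_strictMono (by omega) hj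
  have hne : ((freeIdx m α (j+1) : ℝ) - (freeIdx m α j : ℝ)) ≠ 0 := by
    have : (freeIdx m α j : ℝ) < (freeIdx m α (j+1) : ℝ) := by exact_mod_cast hlt
    linarith
  rw [secondDiff]
  rw [show ((⟨i.val, by have := i.isLt; omega⟩ : Fin m)) = ⟨i.val, by omega⟩ from rfl]
  rw [e0, e1, e2]
  simp only
  push_cast
  field_simp
  ring

lemma discrete_affine (v : ℕ → ℝ) (a c : ℕ) (hac : a < c)
    (h : ∀ s, a < s → s < c → v (s + 1) - v s = v s - v (s - 1)) :
    ∀ s, a ≤ s → s ≤ c → v s = v a + (v c - v a) * (((s : ℝ) - a) / ((c : ℝ) - a)) := by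
  have hca : ((c : ℝ) - a) ≠ 0 := by
    have : (a : ℝ) < c := by exact_mod_cast hac
    linarith
  have step1 : ∀ s, a ≤ s → s < c → v (s + 1) - v s = v (a + 1) - v a := by
    intro s hs
    induction s, hs using Nat.le_induction with
    | base => intro _; rfl
    | succ s hs ih =>
      intro hsc
      have := h (s + 1) (by omega) hsc
      rw [Nat.add_sub_cancel] at this
      rw [this]
      exact ih (by omega)
  have step2 : ∀ s, a ≤ s → s ≤ c → v s = v a + ((s : ℝ) - a) * (v (a + 1) - v a) := by
    intro s hs
    induction s, hs using Nat.le_induction with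
    | base => intro _; simp
    | succ s hs ih =>
      intro hsc
      have h1 := step1 s hs (by omega)
      have h2 := ih (by omega)
      have : v (s + 1) = v s + (v (a + 1) - v a) := by linarith
      rw [this, h2]
      push_cast
      ring
  intro s hs hsc
  have hE1 := step2 s hs hsc
  have hE2 := step2 c (by omega) le_rfl
  have hd : v c - v a = ((c : ℝ) - a) * (v (a + 1) - v a) := by linarith
  rw [hE1, hd]
  field_simp

lemma representation (bhat : Fin m → ℝ) (hα : ∀ i, i ∈ α ↔ secondDiff bhat i = 0)
    (hconv : bhat ∈ cone m) :
    bhat = (Fmat m α)ᵀ *ᵥ (fun j => bhat ⟨freeIdx m α j.val, freeIdx_lt j.isLt⟩) := by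
  funext t
  set x : Fin (freeSet m α).card → ℝ := fun j => bhat ⟨freeIdx m α j.val, freeIdx_lt j.isLt⟩
    with hx
  by_cases hs : t ∈ freeSet m α
  · obtain ⟨j', hj', he⟩ := exists_freeIdx hs
    have ht' : t = ⟨freeIdx m α j', freeIdx_lt hj'⟩ := Fin.ext he.symm
    rw [ht', mulVecT_free x hj']
  · obtain ⟨j, hj, hb1, hb2, hmax⟩ := exists_between_free hs
    rw [mulVecT_between x hj hb1 hb2 hmax]
    set a := freeIdx m α j with ha
    set c := freeIdx m α (j + 1) with hc
    have hcm : c < m := freeIdx_lt hj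
    have hac : a < c := freeIdx_strictMono (by omega) hj
    set v : ℕ → ℝ := fun s => if h : s < m then bhat ⟨s, h⟩ else 0 with hv
    have hda : ∀ s, a < s → s < c → v (s + 1) - v s = v s - v (s - 1) := by
      intro s hs1 hs2
      have hsm : s < m := by omega
      have hsnf : (⟨s, hsm⟩ : Fin m) ∉ freeSet m α := not_free_between (by omega) hs1 hs2
      rw [mem_freeSet] at hsnf
      push_neg at hsnf
      obtain ⟨i, hiα, hie⟩ := hsnf
      have hie' : s = i.val + 1 := hie
      have hsd : secondDiff bhat i = 0 := (hα i).mp hiα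
      have hi2 : i.val + 2 < m := by have := i.isLt; omega
      rw [secondDiff] at hsd
      have hv1 : v (s - 1) = bhat ⟨i.val, by omega⟩ := by
        rw [hv]
        simp only
        rw [dif_pos (show s - 1 < m by omega)]
        congr 1
        rw [Fin.mk_eq_mk]
        omega
      have hv2 : v s = bhat ⟨i.val + 1, by omega⟩ := by
        rw [hv]
        simp only
        rw [dif_pos hsm]
        congr 1
        rw [Fin.mk_eq_mk]
        omega
      have hv3 : v (s + 1) = bhat ⟨i.val + 2, hi2⟩ := by
        rw [hv]
        simp only
        rw [dif_pos (show s + 1 < m by omega)]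
        congr 1
        rw [Fin.mk_eq_mk]
        omega
      rw [hv1, hv2, hv3]
      have : bhat ⟨i.val, by omega⟩ - 2 * bhat ⟨i.val + 1, by omega⟩ + bhat ⟨i.val + 2, hi2⟩ = 0 := hsd
      linarith
    have key := discrete_affine v a c hac hda t.val (by omega) (by omega)
    have hvt : v t.val = bhat t := by
      rw [hv]
      simp only
      rw [dif_pos t.isLt]
    have hva : v a = x ⟨j, by omega⟩ := by
      rw [hv, hx]
      simp only
      rw [dif_pos (show a < m by omega)]
    have hvc : v c = x ⟨j + 1, hj⟩ := by
      rw [hv, hx]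
      simp only
      rw [dif_pos hcm]
    rw [hvt, hva, hvc] at key
    rw [key]


lemma mulVecT_injective {x : Fin (freeSet m α).card → ℝ} (h : (Fmat m α)ᵀ *ᵥ x = 0) :
    x = 0 := by
  funext j
  have := congrFun h ⟨freeIdx m α j.val, freeIdx_lt j.isLt⟩
  rw [mulVecT_free x j.isLt] at this
  simpa using this

end Aux

lemma quad_coeff_zero {a c ε₀ : ℝ} (hε₀ : 0 < ε₀)
    (h : ∀ ε : ℝ, |ε| ≤ ε₀ → 0 ≤ ε * c + ε ^ 2 * a) : c = 0 := by
  by_contra hc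
  have hc2 : 0 < c ^ 2 := by positivity
  have habs : 0 < |c| := abs_pos.mpr hc
  set δ : ℝ := min (ε₀ / |c|) (1 / (|a| + 1)) with hδdef
  have hδ : 0 < δ := lt_min (by positivity) (by positivity)
  have h1 : δ ≤ ε₀ / |c| := min_le_left _ _
  have h2 : δ ≤ 1 / (|a| + 1) := min_le_right _ _
  have hεle : |(-δ * c)| ≤ ε₀ := by
    rw [abs_mul, abs_neg, abs_of_pos hδ]
    calc δ * |c| ≤ (ε₀ / |c|) * |c| := by nlinarith
      _ = ε₀ := by field_simp
  have key := h (-δ * c) hεle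
  have hda : δ * a < 1 := by
    have l1 : δ * a ≤ δ * |a| := by nlinarith [le_abs_self a]
    have l2 : δ * |a| ≤ (1 / (|a| + 1)) * |a| := by nlinarith [abs_nonneg a]
    have l3 : (1 / (|a| + 1)) * |a| < 1 := by
      rw [div_mul_eq_mul_div, div_lt_one (by positivity)]
      linarith
    linarith
  have expand : -δ * c * c + (-δ * c) ^ 2 * a = δ * c ^ 2 * (δ * a - 1) := by ring
  have hneg : δ * c ^ 2 * (δ * a - 1) < 0 :=
    mul_neg_of_pos_of_neg (by positivity) (by linarith)
  rw [expand] at key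
  linarith

lemma secondDiff_add_smul {m : ℕ} (b v : Fin m → ℝ) (ε : ℝ) (i : Fin (m - 2)) :
    secondDiff (b + ε • v) i = secondDiff b i + ε * secondDiff v i := by
  simp [secondDiff]
  ring

lemma objFun_add_smul {m : ℕ} (L : Matrix (Fin m) (Fin m) ℝ) (yb b v : Fin m → ℝ) (ε : ℝ) :
    objFun L yb (b + ε • v) = objFun L yb b +
      ε * ((1 / 2) * (v ⬝ᵥ L *ᵥ b + b ⬝ᵥ L *ᵥ v) - v ⬝ᵥ yb) +
      ε ^ 2 * ((1 / 2) * (v ⬝ᵥ L *ᵥ v)) := by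
  simp only [objFun, Matrix.mulVec_add, Matrix.mulVec_smul, dotProduct_add,
    add_dotProduct, dotProduct_smul, smul_dotProduct, smul_eq_mul]
  ring



/-- Proposition 2.1.  For each index set `α ⊆ {1,…,K_n+p-2}`, the matrix
`F_α ∈ ℝ^{ℓ×(K_n+p)}` with `ℓ = K_n+p-|α|` has linearly independent rows and `F_α Λ F_αᵀ` is
positive definite; moreover, if `b̂` is the minimizer of `(1/2)bᵀΛb - bᵀȳ` over `Ω` and
`α = {i : (D₂b̂)_i = 0}`, then `b̂ = F_αᵀ (F_α Λ F_αᵀ)⁻¹ F_α ȳ`. -/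
theorem stmt1 (n K p : ℕ) (hn : 0 < n) (hK : 0 < K) (hdvd : K ∣ n)
    (hpd : (Lam n K p).PosDef)
    (ybar : Fin (K + p) → ℝ) (bhat : Fin (K + p) → ℝ)
    (hmem : bhat ∈ cone (K + p))
    (hmin : ∀ b ∈ cone (K + p), objFun (Lam n K p) ybar bhat ≤ objFun (Lam n K p) ybar b)
    (α : Finset (Fin (K + p - 2)))
    (hα : ∀ i : Fin (K + p - 2), i ∈ α ↔ secondDiff bhat i = 0) :
    (∀ α' : Finset (Fin (K + p - 2)),
        (freeSet (K + p) α').card = K + p - α'.card ∧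
        LinearIndependent ℝ (fun j => Fmat (K + p) α' j) ∧
        (Fmat (K + p) α' * Lam n K p * (Fmat (K + p) α')ᵀ).PosDef) ∧
    bhat = (Fmat (K + p) α)ᵀ *ᵥ
        ((Fmat (K + p) α * Lam n K p * (Fmat (K + p) α)ᵀ)⁻¹ *ᵥ (Fmat (K + p) α *ᵥ ybar)) := by
  have hLt : (Lam n K p)ᵀ = Lam n K p := by
    rw [← Matrix.conjTranspose_eq_transpose_of_trivial]
    exact hpd.1
  have hall : ∀ α' : Finset (Fin (K + p - 2)),
      (freeSet (K + p) α').card = K + p - α'.card ∧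
      LinearIndependent ℝ (fun j => Fmat (K + p) α' j) ∧
      (Fmat (K + p) α' * Lam n K p * (Fmat (K + p) α')ᵀ).PosDef := by
    intro α'
    refine ⟨card_freeSet', ?_, ?_⟩
    · rw [Fintype.linearIndependent_iff]
      intro g hg j
      have hz : (Fmat (K + p) α')ᵀ *ᵥ g = 0 := by
        funext t
        have := congrFun hg t
        simpa [Matrix.mulVec, dotProduct, mul_comm] using this
      have := congrFun (mulVecT_injective hz) j
      simpa using this
    · rw [Matrix.posDef_iff_dotProduct_mulVec]
      constructor
      · rw [← Matrix.conjTranspose_eq_transpose_of_trivial]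
        exact Matrix.isHermitian_mul_mul_conjTranspose _ hpd.1
      · intro x hx
        have hFx : (Fmat (K + p) α')ᵀ *ᵥ x ≠ 0 := fun h => hx (mulVecT_injective h)
        have hq := (Matrix.posDef_iff_dotProduct_mulVec.mp hpd).2 (x := (Fmat (K + p) α')ᵀ *ᵥ x) hFx
        have hrw : x ⬝ᵥ (Fmat (K + p) α' * Lam n K p * (Fmat (K + p) α')ᵀ) *ᵥ x
            = ((Fmat (K + p) α')ᵀ *ᵥ x) ⬝ᵥ (Lam n K p) *ᵥ ((Fmat (K + p) α')ᵀ *ᵥ x) := by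
          rw [← Matrix.mulVec_mulVec, ← Matrix.mulVec_mulVec,
            Matrix.dotProduct_mulVec x (Fmat (K + p) α'), ← Matrix.mulVec_transpose]
        simpa [hrw] using hq
  refine ⟨hall, ?_⟩
  -- notation
  set F := Fmat (K + p) α with hF
  set L := Lam n K p with hL
  set btil : Fin (freeSet (K + p) α).card → ℝ :=
    fun j => bhat ⟨freeIdx (K + p) α j.val, freeIdx_lt j.isLt⟩ with hbtil
  have hrep : bhat = Fᵀ *ᵥ btil := representation bhat hα hmem
  -- stationarity
  have hstat : ∀ d : Fin (freeSet (K + p) α).card → ℝ,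
      (Fᵀ *ᵥ d) ⬝ᵥ (L *ᵥ bhat) = (Fᵀ *ᵥ d) ⬝ᵥ ybar := by
    intro d
    set v : Fin (K + p) → ℝ := Fᵀ *ᵥ d with hv
    have hsdv : ∀ i ∈ α, secondDiff v i = 0 := fun i hi => secondDiff_mulVecT d hi
    set S : Finset ℝ := insert 1 ((Finset.univ.filter (· ∉ α)).image
      fun i => secondDiff bhat i / (|secondDiff v i| + 1)) with hS
    have hSne : S.Nonempty := ⟨1, Finset.mem_insert_self _ _⟩
    set ε₀ : ℝ := S.min' hSne with hε₀
    have hsdpos : ∀ i : Fin (K + p - 2), i ∉ α → 0 < secondDiff bhat i := by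
      intro i hi
      have h1 : 0 ≤ secondDiff bhat i := hmem i
      have h2 : secondDiff bhat i ≠ 0 := fun h => hi ((hα i).mpr h)
      exact lt_of_le_of_ne h1 (Ne.symm h2)
    have hpos : 0 < ε₀ := by
      rw [hε₀, Finset.lt_min'_iff]
      intro y hy
      rw [hS, Finset.mem_insert] at hy
      rcases hy with rfl | hy
      · norm_num
      · obtain ⟨i, hi, rfl⟩ := Finset.mem_image.mp hy
        rw [Finset.mem_filter] at hi
        exact div_pos (hsdpos i hi.2) (by positivity)
    have hcone : ∀ ε : ℝ, |ε| ≤ ε₀ → bhat + ε • v ∈ cone (K + p) := by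
      intro ε hε i
      rw [secondDiff_add_smul]
      by_cases hi : i ∈ α
      · rw [(hα i).mp hi, hsdv i hi]
        simp
      · have hp := hsdpos i hi
        have hmemS : secondDiff bhat i / (|secondDiff v i| + 1) ∈ S := by
          rw [hS]
          exact Finset.mem_insert_of_mem (Finset.mem_image_of_mem _
            (Finset.mem_filter.mpr ⟨Finset.mem_univ i, hi⟩))
        have hb := Finset.min'_le S _ hmemS
        have hq : (0:ℝ) < |secondDiff v i| + 1 := by positivity
        have hb2 : ε₀ * (|secondDiff v i| + 1) ≤ secondDiff bhat i := by
          rw [← le_div_iff₀ hq]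
          exact hb
        have habs : |ε * secondDiff v i| ≤ ε₀ * (|secondDiff v i| + 1) := by
          rw [abs_mul]
          have h1 : |ε| * |secondDiff v i| ≤ ε₀ * |secondDiff v i| :=
            mul_le_mul_of_nonneg_right hε (abs_nonneg _)
          nlinarith [abs_nonneg (secondDiff v i), hpos.le]
        have := neg_abs_le (ε * secondDiff v i)
        linarith
    have hquad : ∀ ε : ℝ, |ε| ≤ ε₀ →
        0 ≤ ε * ((1 / 2) * (v ⬝ᵥ L *ᵥ bhat + bhat ⬝ᵥ L *ᵥ v) - v ⬝ᵥ ybar) +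
          ε ^ 2 * ((1 / 2) * (v ⬝ᵥ L *ᵥ v)) := by
      intro ε hε
      have h1 := hmin _ (hcone ε hε)
      have h2 := objFun_add_smul L ybar bhat v ε
      rw [h2] at h1
      linarith
    have hc0 := quad_coeff_zero hpos hquad
    have hsym : bhat ⬝ᵥ L *ᵥ v = v ⬝ᵥ L *ᵥ bhat := by
      rw [Matrix.dotProduct_mulVec bhat L v]
      have h1 : bhat ᵥ* L = L *ᵥ bhat := by
        rw [← hLt, Matrix.vecMul_transpose, hLt]
      rw [h1, dotProduct_comm]
    rw [hsym] at hc0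
    have : v ⬝ᵥ L *ᵥ bhat = v ⬝ᵥ ybar := by linarith
    exact this
  have hFLb : F *ᵥ (L *ᵥ bhat) = F *ᵥ ybar := by
    funext j
    have := hstat (Pi.single j 1)
    rw [Matrix.mulVec_transpose] at this
    simp only [← Matrix.dotProduct_mulVec] at this
    simpa [dotProduct, Pi.single_apply] using this
  have hMpd := (hall α).2.2
  have hdet : IsUnit (F * L * Fᵀ).det := by
    rw [← hF] at hMpd
    exact isUnit_iff_ne_zero.mpr hMpd.det_pos.ne'
  have hMb : (F * L * Fᵀ) *ᵥ btil = F *ᵥ ybar := by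
    rw [← Matrix.mulVec_mulVec, ← Matrix.mulVec_mulVec, ← hrep]
    exact hFLb
  rw [← hMb, Matrix.mulVec_mulVec btil (F * L * Fᵀ)⁻¹ (F * L * Fᵀ),
    Matrix.nonsing_inv_mul _ hdet, Matrix.one_mulVec]
  exact hrep

end
end

section
/- Let Λ ∈ ℝ^{m×m} be symmetric positive definite, let F ∈ ℝ^{ℓ×m} have linearly independent rows, and let Ξ ∈ ℝ^{ℓ×ℓ} be diagonal with strictly positive diagonal entries. Then: (1) all eigenvalues of ΞFΛFᵀ and of ΞFFᵀ are positive real numbers; (2) λ_min(Λ)·λ_min(ΞFFᵀ) ≤ λ_min(ΞFΛFᵀ), and λ_max(ΞFΛFᵀ) ≤ λ_max(Λ)·λ_max(ΞFFᵀ). -/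
open Matrix

noncomputable section

namespace Stmt4Aux

variable {n m : Type*} [Fintype n] [Fintype m] [DecidableEq n] [DecidableEq m]

omit [DecidableEq m] in
lemma exists_eigenvec {K : Type*} [Field K] {M : Matrix n n K} {μ : K}
    (h : μ ∈ spectrum K M) : ∃ v, v ≠ 0 ∧ M *ᵥ v = μ • v := by
  rw [spectrum.mem_iff, Algebra.algebraMap_eq_smul_one] at h
  have hdet : (μ • (1 : Matrix n n K) - M).det = 0 := by
    by_contra hd
    exact h ((Matrix.isUnit_iff_isUnit_det _).2 (isUnit_iff_ne_zero.2 hd))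
  obtain ⟨v, hv0, hv⟩ := (Matrix.exists_mulVec_eq_zero_iff).2 hdet
  refine ⟨v, hv0, ?_⟩
  rw [sub_mulVec, smul_mulVec, one_mulVec, sub_eq_zero] at hv
  exact hv.symm

omit [DecidableEq n] [DecidableEq m] in
lemma posDef_conj {A : Matrix n n ℝ} (hA : A.PosDef) (B : Matrix n m ℝ)
    (hB : Function.Injective B.mulVec) : (Bᵀ * A * B).PosDef := by
  refine Matrix.PosDef.of_dotProduct_mulVec_pos ?_ fun x hx => ?_
  · rw [← conjTranspose_eq_transpose_of_trivial]
    exact isHermitian_conjTranspose_mul_mul B hA.isHermitian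
  · have hBx : B *ᵥ x ≠ 0 := by
      intro h0
      exact hx (hB (h0.trans (B.mulVec_zero).symm))
    have e1 : (Bᵀ * A * B) *ᵥ x = Bᵀ *ᵥ (A *ᵥ (B *ᵥ x)) := by
      rw [mulVec_mulVec, mulVec_mulVec]
    have := hA.dotProduct_mulVec_pos hBx
    rwa [star_trivial, e1, dotProduct_mulVec, vecMul_transpose, ← star_trivial (B *ᵥ x)]

lemma spec_swap {R A : Type*} [CommSemiring R] [Ring A] [Algebra R A] {g : A}
    (hg : IsUnit g) (a : A) : spectrum R (g * a) = spectrum R (a * g) := by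
  obtain ⟨u, rfl⟩ := hg
  have e : (u : A) * (a * ↑u) * ↑u⁻¹ = ↑u * a := by
    rw [mul_assoc, mul_assoc, Units.mul_inv, mul_one]
  rw [← e, spectrum.units_conjugate]

omit [Fintype m] [DecidableEq m] [DecidableEq n] in
lemma dot_self_pos {v : n → ℝ} (hv : v ≠ 0) : 0 < v ⬝ᵥ v := by
  have h0 : 0 ≤ v ⬝ᵥ v := Finset.sum_nonneg fun i _ => mul_self_nonneg _
  rcases h0.lt_or_eq with h | h
  · exact h
  · exact absurd (dotProduct_self_eq_zero.1 h.symm) hv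

omit [Fintype m] [DecidableEq m] in
lemma le_eig_of_psd {A : Matrix n n ℝ} (hA : A.IsHermitian) {c : ℝ}
    (h : (A - c • 1).PosSemidef) (i : n) : c ≤ hA.eigenvalues i := by
  set v : n → ℝ := ⇑(hA.eigenvectorBasis i) with hv
  have hv0 : v ≠ 0 := by
    intro h0; apply hA.eigenvectorBasis.orthonormal.ne_zero i; ext j; exact congrFun h0 j
  have h2 := h.dotProduct_mulVec_nonneg v
  have hAv : A *ᵥ v = hA.eigenvalues i • v := hA.mulVec_eigenvectorBasis i
  rw [sub_mulVec, smul_mulVec, one_mulVec, hAv] at h2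
  simp only [star_trivial, dotProduct_sub, dotProduct_smul, smul_eq_mul] at h2
  have hvv := dot_self_pos hv0
  nlinarith [h2, hvv]

omit [Fintype m] [DecidableEq m] in
lemma eig_le_of_psd {A : Matrix n n ℝ} (hA : A.IsHermitian) {c : ℝ}
    (h : (c • 1 - A).PosSemidef) (i : n) : hA.eigenvalues i ≤ c := by
  set v : n → ℝ := ⇑(hA.eigenvectorBasis i) with hv
  have hv0 : v ≠ 0 := by
    intro h0; apply hA.eigenvectorBasis.orthonormal.ne_zero i; ext j; exact congrFun h0 j
  have h2 := h.dotProduct_mulVec_nonneg v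
  have hAv : A *ᵥ v = hA.eigenvalues i • v := hA.mulVec_eigenvectorBasis i
  rw [sub_mulVec, smul_mulVec, one_mulVec, hAv] at h2
  simp only [star_trivial, dotProduct_sub, dotProduct_smul, smul_eq_mul] at h2
  have hvv := dot_self_pos hv0
  nlinarith [h2, hvv]

omit [Fintype m] [DecidableEq m] in
lemma psd_sub_smul {A : Matrix n n ℝ} (hA : A.IsHermitian) {c : ℝ}
    (h : ∀ i, c ≤ hA.eigenvalues i) : (A - c • 1).PosSemidef := by
  have hU : (hA.eigenvectorUnitary : Matrix n n ℝ) * star (hA.eigenvectorUnitary : Matrix n n ℝ)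
      = 1 := Matrix.mem_unitaryGroup_iff.mp hA.eigenvectorUnitary.2
  have hdiag : diagonal (fun i => hA.eigenvalues i - c) =
      diagonal (RCLike.ofReal ∘ hA.eigenvalues) - c • (1 : Matrix n n ℝ) := by
    ext i j
    rcases eq_or_ne i j with rfl | hij
    · simp [diagonal_apply_eq, Matrix.one_apply_eq, RCLike.ofReal]
    · simp [diagonal_apply_ne _ hij, Matrix.one_apply_ne hij]
  have key : A - c • 1 =
      (hA.eigenvectorUnitary : Matrix n n ℝ) * diagonal (fun i => hA.eigenvalues i - c) *
        star (hA.eigenvectorUnitary : Matrix n n ℝ) := by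
    rw [hdiag, Matrix.mul_sub, Matrix.mul_smul, mul_one, Matrix.sub_mul, Matrix.smul_mul, hU,
      ← Unitary.conjStarAlgAut_apply (S := ℝ), ← hA.spectral_theorem]
  rw [key]
  exact (PosSemidef.diagonal fun i => sub_nonneg.2 (h i)).mul_mul_conjTranspose_same _

omit [Fintype m] [DecidableEq m] in
lemma psd_smul_sub {A : Matrix n n ℝ} (hA : A.IsHermitian) {c : ℝ}
    (h : ∀ i, hA.eigenvalues i ≤ c) : (c • 1 - A).PosSemidef := by
  have hU : (hA.eigenvectorUnitary : Matrix n n ℝ) * star (hA.eigenvectorUnitary : Matrix n n ℝ)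
      = 1 := Matrix.mem_unitaryGroup_iff.mp hA.eigenvectorUnitary.2
  have hdiag : diagonal (fun i => c - hA.eigenvalues i) =
      c • (1 : Matrix n n ℝ) - diagonal (RCLike.ofReal ∘ hA.eigenvalues) := by
    ext i j
    rcases eq_or_ne i j with rfl | hij
    · simp [diagonal_apply_eq, Matrix.one_apply_eq, RCLike.ofReal]
    · simp [diagonal_apply_ne _ hij, Matrix.one_apply_ne hij]
  have key : c • 1 - A =
      (hA.eigenvectorUnitary : Matrix n n ℝ) * diagonal (fun i => c - hA.eigenvalues i) *
        star (hA.eigenvectorUnitary : Matrix n n ℝ) := by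
    rw [hdiag, Matrix.mul_sub, Matrix.sub_mul, Matrix.mul_smul, mul_one, Matrix.smul_mul, hU,
      ← Unitary.conjStarAlgAut_apply (S := ℝ), ← hA.spectral_theorem]
  rw [key]
  exact (PosSemidef.diagonal fun i => sub_nonneg.2 (h i)).mul_mul_conjTranspose_same _

omit [Fintype m] [DecidableEq m] [DecidableEq n] in
lemma psd_smul {M : Matrix n n ℝ} (hM : M.PosSemidef) {a : ℝ} (ha : 0 ≤ a) :
    (a • M).PosSemidef := by
  refine PosSemidef.of_dotProduct_mulVec_nonneg ?_ fun x => ?_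
  · rw [IsHermitian, conjTranspose_smul, star_trivial, hM.1.eq]
  · rw [smul_mulVec, dotProduct_smul, smul_eq_mul]
    exact mul_nonneg ha (hM.dotProduct_mulVec_nonneg x)

omit [Fintype m] [DecidableEq m] in
lemma spectrum_map_complex {A : Matrix n n ℝ} (hA : A.PosDef) :
    ∀ μ ∈ spectrum ℂ (A.map (algebraMap ℝ ℂ)), μ.im = 0 ∧ 0 < μ.re := by
  intro μ hμ
  set M : Matrix n n ℂ := A.map (algebraMap ℝ ℂ) with hMdef
  have hsymm : ∀ i j, A j i = A i j := by
    intro i j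
    conv_lhs => rw [← hA.isHermitian.eq]
    simp [conjTranspose_apply]
  have hMH : M.IsHermitian := by
    ext i j
    simp only [conjTranspose_apply, hMdef, map_apply, Complex.coe_algebraMap]
    rw [Complex.star_def, Complex.conj_ofReal, hsymm]
  obtain ⟨v, hv0, hv⟩ := exists_eigenvec hμ
  set q : ℂ := star v ⬝ᵥ (M *ᵥ v) with hqdef
  have hqstar : star q = q := by
    calc star q = star (M *ᵥ v) ⬝ᵥ star (star v) := by
          rw [star_dotProduct_star]
      _ = (star v ᵥ* Mᴴ) ⬝ᵥ v := by rw [star_star, star_mulVec]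
      _ = star v ⬝ᵥ (M *ᵥ v) := by rw [hMH.eq, ← dotProduct_mulVec]
      _ = q := rfl
  set c : ℝ := ∑ i, Complex.normSq (v i) with hcdef
  have hcpos : 0 < c := by
    have h0 : ∀ i, 0 ≤ Complex.normSq (v i) := fun i => Complex.normSq_nonneg _
    have : ∃ i, v i ≠ 0 := by
      by_contra hfa
      push_neg at hfa
      exact hv0 (funext hfa)
    obtain ⟨i, hi⟩ := this
    exact Finset.sum_pos' (fun i _ => h0 i) ⟨i, Finset.mem_univ i,
      Complex.normSq_pos.2 hi⟩
  have hsvv : star v ⬝ᵥ v = (c : ℂ) := by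
    rw [hcdef]
    push_cast
    refine Finset.sum_congr rfl fun i _ => ?_
    simp only [Pi.star_apply, Complex.star_def]
    rw [mul_comm, Complex.mul_conj]
  have hqc : q = μ * (c : ℂ) := by
    rw [hqdef, hv, dotProduct_smul, smul_eq_mul, hsvv]
  set x : n → ℝ := fun i => (v i).re with hxdef
  set y : n → ℝ := fun i => (v i).im with hydef
  have hre : q.re = x ⬝ᵥ (A *ᵥ x) + y ⬝ᵥ (A *ᵥ y) := by
    simp only [hqdef, dotProduct, mulVec, Pi.star_apply, Complex.star_def, hMdef, map_apply,
      Complex.coe_algebraMap, Complex.re_sum, Complex.mul_re, Complex.conj_re, Complex.conj_im,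
      Complex.im_sum, Complex.mul_im, Complex.ofReal_re, Complex.ofReal_im, zero_mul, add_zero,
      zero_add, neg_mul, sub_neg_eq_add, sub_zero, mul_zero]
    rw [← Finset.sum_add_distrib]
  have hxy : x ≠ 0 ∨ y ≠ 0 := by
    by_contra hc2
    push_neg at hc2
    apply hv0
    funext i
    have hx := congrFun hc2.1 i
    have hy := congrFun hc2.2 i
    exact Complex.ext hx hy
  have hqre : 0 < q.re := by
    rw [hre]
    have hx2 : 0 ≤ x ⬝ᵥ (A *ᵥ x) := by
      have := hA.posSemidef.dotProduct_mulVec_nonneg x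
      rwa [star_trivial] at this
    have hy2 : 0 ≤ y ⬝ᵥ (A *ᵥ y) := by
      have := hA.posSemidef.dotProduct_mulVec_nonneg y
      rwa [star_trivial] at this
    rcases hxy with hx0 | hy0
    · have := hA.dotProduct_mulVec_pos hx0
      rw [star_trivial] at this
      linarith
    · have := hA.dotProduct_mulVec_pos hy0
      rw [star_trivial] at this
      linarith
  have hqim : q.im = 0 := by
    have := congrArg Complex.im hqstar
    simp only [Complex.star_def, Complex.conj_im] at this
    linarith
  have him : μ.im = 0 := by
    have h1 : q.im = μ.im * c := by
      rw [hqc]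
      simp [Complex.mul_im]
    rw [hqim] at h1
    rcases mul_eq_zero.1 h1.symm with h | h
    · exact h
    · exact absurd h hcpos.ne'
  have hrei : q.re = μ.re * c := by
    rw [hqc]
    simp [Complex.mul_re]
  refine ⟨him, ?_⟩
  by_contra hle
  push_neg at hle
  nlinarith [hqre, hrei, hcpos]

end Stmt4Aux

open Stmt4Aux

/-- Proposition 6.1.  Let `Λ ∈ ℝ^{m×m}` be symmetric positive definite,
`F ∈ ℝ^{ℓ×m}` with linearly independent rows, and `Ξ` diagonal with positive diagonal.
Then all (complex) eigenvalues of `Ξ F Λ Fᵀ` and of `Ξ F Fᵀ` are positive reals, and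
`λ_min(Λ)·λ_min(ΞFFᵀ) ≤ λ_min(ΞFΛFᵀ)` and `λ_max(ΞFΛFᵀ) ≤ λ_max(Λ)·λ_max(ΞFFᵀ)`,
where `λ_min`/`λ_max` denote the smallest/largest (real) eigenvalues. -/
theorem stmt4 (m l : ℕ) (hl : 0 < l)
    (Lam : Matrix (Fin m) (Fin m) ℝ) (hsym : Lam.IsSymm) (hpd : Lam.PosDef)
    (F : Matrix (Fin l) (Fin m) ℝ) (hF : LinearIndependent ℝ (fun j => F j))
    (Xi : Matrix (Fin l) (Fin l) ℝ)
    (hXi : ∃ d : Fin l → ℝ, (∀ i, 0 < d i) ∧ Xi = Matrix.diagonal d) :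
    (∀ μ ∈ spectrum ℂ ((Xi * F * Lam * Fᵀ).map (algebraMap ℝ ℂ)), μ.im = 0 ∧ 0 < μ.re) ∧
    (∀ μ ∈ spectrum ℂ ((Xi * F * Fᵀ).map (algebraMap ℝ ℂ)), μ.im = 0 ∧ 0 < μ.re) ∧
    sInf (spectrum ℝ Lam) * sInf (spectrum ℝ (Xi * F * Fᵀ)) ≤
      sInf (spectrum ℝ (Xi * F * Lam * Fᵀ)) ∧
    sSup (spectrum ℝ (Xi * F * Lam * Fᵀ)) ≤
      sSup (spectrum ℝ Lam) * sSup (spectrum ℝ (Xi * F * Fᵀ)) := by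
  obtain ⟨d, hd, rfl⟩ := hXi
  -- nonemptiness of index types
  have hm0 : m ≠ 0 := by
    intro h
    subst h
    exact hF.ne_zero ⟨0, hl⟩ (funext fun j => Fin.elim0 j)
  have hm : Nonempty (Fin m) := ⟨⟨0, Nat.pos_of_ne_zero hm0⟩⟩
  have hln : Nonempty (Fin l) := ⟨⟨0, hl⟩⟩
  -- the square root of the diagonal matrix
  set g : Matrix (Fin l) (Fin l) ℝ := Matrix.diagonal fun i => Real.sqrt (d i) with hgdef
  have hg2 : g * g = Matrix.diagonal d := by
    rw [hgdef, diagonal_mul_diagonal]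
    exact congrArg Matrix.diagonal (funext fun i => Real.mul_self_sqrt (hd i).le)
  have hgu : IsUnit g := by
    rw [Matrix.isUnit_iff_isUnit_det, hgdef, det_diagonal]
    exact (Finset.prod_pos fun i _ => Real.sqrt_pos.2 (hd i)).ne'.isUnit
  set B : Matrix (Fin m) (Fin l) ℝ := Fᵀ * g with hBdef
  have hBt : Bᵀ = g * F := by
    rw [hBdef, transpose_mul, transpose_transpose, hgdef, diagonal_transpose]
  have hBinj : Function.Injective B.mulVec := by
    have hcomp : B.mulVec = Fᵀ.mulVec ∘ g.mulVec := by
      funext xv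
      simp [hBdef, ← mulVec_mulVec]
    rw [hcomp]
    exact (Matrix.mulVec_injective_iff.2 (by exact hF)).comp
      (Matrix.mulVec_injective_iff_isUnit.2 hgu)
  have hApd : (Bᵀ * Lam * B).PosDef := posDef_conj hpd B hBinj
  have hSpd : (Bᵀ * B).PosDef := by
    have := posDef_conj Matrix.PosDef.one B hBinj
    rwa [Matrix.mul_one] at this
  -- matrix identities
  have e1 : Matrix.diagonal d * F * Lam * Fᵀ = g * (g * F * Lam * Fᵀ) := by
    rw [← hg2]
    simp only [Matrix.mul_assoc]
  have e2 : Bᵀ * Lam * B = g * F * Lam * Fᵀ * g := by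
    rw [hBt, hBdef]
    simp only [Matrix.mul_assoc]
  have e3 : Matrix.diagonal d * F * Fᵀ = g * (g * F * Fᵀ) := by
    rw [← hg2]
    simp only [Matrix.mul_assoc]
  have e4 : Bᵀ * B = g * F * Fᵀ * g := by
    rw [hBt, hBdef]
    simp only [Matrix.mul_assoc]
  -- spectrum transfers over ℝ
  have specA : spectrum ℝ (Matrix.diagonal d * F * Lam * Fᵀ) = spectrum ℝ (Bᵀ * Lam * B) := by
    rw [e1, e2, spec_swap hgu]
  have specS : spectrum ℝ (Matrix.diagonal d * F * Fᵀ) = spectrum ℝ (Bᵀ * B) := by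
    rw [e3, e4, spec_swap hgu]
  -- spectrum transfers over ℂ
  have hgum : IsUnit (g.map (algebraMap ℝ ℂ)) := by
    have := hgu.map (RingHom.mapMatrix (algebraMap ℝ ℂ))
    simpa [RingHom.mapMatrix_apply] using this
  have em1 : (g * (g * F * Lam * Fᵀ)).map (algebraMap ℝ ℂ) =
      g.map (algebraMap ℝ ℂ) * (g * F * Lam * Fᵀ).map (algebraMap ℝ ℂ) := Matrix.map_mul
  have em2 : (g * F * Lam * Fᵀ * g).map (algebraMap ℝ ℂ) =
      (g * F * Lam * Fᵀ).map (algebraMap ℝ ℂ) * g.map (algebraMap ℝ ℂ) := Matrix.map_mul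
  have em3 : (g * (g * F * Fᵀ)).map (algebraMap ℝ ℂ) =
      g.map (algebraMap ℝ ℂ) * (g * F * Fᵀ).map (algebraMap ℝ ℂ) := Matrix.map_mul
  have em4 : (g * F * Fᵀ * g).map (algebraMap ℝ ℂ) =
      (g * F * Fᵀ).map (algebraMap ℝ ℂ) * g.map (algebraMap ℝ ℂ) := Matrix.map_mul
  have specAc : spectrum ℂ ((Matrix.diagonal d * F * Lam * Fᵀ).map (algebraMap ℝ ℂ)) =
      spectrum ℂ ((Bᵀ * Lam * B).map (algebraMap ℝ ℂ)) := by
    rw [e1, e2, em1, em2, spec_swap hgum]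
  have specSc : spectrum ℂ ((Matrix.diagonal d * F * Fᵀ).map (algebraMap ℝ ℂ)) =
      spectrum ℂ ((Bᵀ * B).map (algebraMap ℝ ℂ)) := by
    rw [e3, e4, em3, em4, spec_swap hgum]
  -- Hermitian structures
  have hLH : Lam.IsHermitian := hpd.isHermitian
  have hAH : (Bᵀ * Lam * B).IsHermitian := hApd.isHermitian
  have hSH : (Bᵀ * B).IsHermitian := hSpd.isHermitian
  -- spectra as ranges of eigenvalues
  have hspecL : spectrum ℝ Lam = Set.range hLH.eigenvalues := hLH.spectrum_real_eq_range_eigenvalues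
  have hspecA2 : spectrum ℝ (Bᵀ * Lam * B) = Set.range hAH.eigenvalues :=
    hAH.spectrum_real_eq_range_eigenvalues
  have hspecS2 : spectrum ℝ (Bᵀ * B) = Set.range hSH.eigenvalues :=
    hSH.spectrum_real_eq_range_eigenvalues
  refine ⟨?_, ?_, ?_, ?_⟩
  · intro μ hμ
    exact spectrum_map_complex hApd μ (specAc ▸ hμ)
  · intro μ hμ
    exact spectrum_map_complex hSpd μ (specSc ▸ hμ)
  · -- lower bound on sInf
    rw [specA, specS]
    set a := sInf (spectrum ℝ Lam) with hadef
    set s := sInf (spectrum ℝ (Bᵀ * B)) with hsdef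
    have ha_le : ∀ i, a ≤ hLH.eigenvalues i := fun i => by
      rw [hadef, hspecL]
      exact csInf_le (Set.finite_range _).bddBelow ⟨i, rfl⟩
    have hs_le : ∀ i, s ≤ hSH.eigenvalues i := fun i => by
      rw [hsdef, hspecS2]
      exact csInf_le (Set.finite_range _).bddBelow ⟨i, rfl⟩
    have ha_pos : 0 < a := by
      have hmem : a ∈ spectrum ℝ Lam := by
        rw [hadef]
        exact Set.Nonempty.csInf_mem (hspecL ▸ Set.range_nonempty _)
          (hspecL ▸ Set.finite_range _)
      rw [hspecL] at hmem
      obtain ⟨i, hi⟩ := hmem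
      rw [← hi]
      exact hpd.eigenvalues_pos i
    have h1 : (Lam - a • 1).PosSemidef := psd_sub_smul hLH ha_le
    have h2 : (Bᵀ * (Lam - a • 1) * B).PosSemidef := by
      have := h1.conjTranspose_mul_mul_same B
      rwa [conjTranspose_eq_transpose_of_trivial] at this
    have h3 : Bᵀ * (Lam - a • 1) * B = Bᵀ * Lam * B - a • (Bᵀ * B) := by
      rw [Matrix.mul_sub, Matrix.mul_smul, Matrix.mul_one, Matrix.sub_mul, Matrix.smul_mul]
    rw [h3] at h2
    have h4 : (Bᵀ * B - s • 1).PosSemidef := psd_sub_smul hSH hs_le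
    have h5 := psd_smul h4 ha_pos.le
    have h6 : (Bᵀ * Lam * B - (a * s) • 1).PosSemidef := by
      have heq : Bᵀ * Lam * B - (a * s) • (1 : Matrix (Fin l) (Fin l) ℝ) =
          (Bᵀ * Lam * B - a • (Bᵀ * B)) + a • (Bᵀ * B - s • 1) := by
        rw [smul_sub, smul_smul]
        abel
      rw [heq]
      exact h2.add h5
    refine le_csInf (hspecA2 ▸ Set.range_nonempty _) fun μ hμ => ?_
    rw [hspecA2] at hμ
    obtain ⟨i, rfl⟩ := hμ
    exact le_eig_of_psd hAH h6 i
  · -- upper bound on sSup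
    rw [specA, specS]
    set b := sSup (spectrum ℝ Lam) with hbdef
    set t := sSup (spectrum ℝ (Bᵀ * B)) with htdef
    have hb_ge : ∀ i, hLH.eigenvalues i ≤ b := fun i => by
      rw [hbdef, hspecL]
      exact le_csSup (Set.finite_range _).bddAbove ⟨i, rfl⟩
    have ht_ge : ∀ i, hSH.eigenvalues i ≤ t := fun i => by
      rw [htdef, hspecS2]
      exact le_csSup (Set.finite_range _).bddAbove ⟨i, rfl⟩
    have hb_pos : 0 < b := by
      have hmem : b ∈ spectrum ℝ Lam := by
        rw [hbdef]
        exact Set.Nonempty.csSup_mem (hspecL ▸ Set.range_nonempty _)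
          (hspecL ▸ Set.finite_range _)
      rw [hspecL] at hmem
      obtain ⟨i, hi⟩ := hmem
      rw [← hi]
      exact hpd.eigenvalues_pos i
    have h1 : (b • 1 - Lam).PosSemidef := psd_smul_sub hLH hb_ge
    have h2 : (Bᵀ * (b • 1 - Lam) * B).PosSemidef := by
      have := h1.conjTranspose_mul_mul_same B
      rwa [conjTranspose_eq_transpose_of_trivial] at this
    have h3 : Bᵀ * (b • 1 - Lam) * B = b • (Bᵀ * B) - Bᵀ * Lam * B := by
      rw [Matrix.mul_sub, Matrix.mul_smul, Matrix.mul_one, Matrix.sub_mul, Matrix.smul_mul]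
    rw [h3] at h2
    have h4 : (t • 1 - Bᵀ * B).PosSemidef := psd_smul_sub hSH ht_ge
    have h5 := psd_smul h4 hb_pos.le
    have h6 : ((b * t) • (1 : Matrix (Fin l) (Fin l) ℝ) - Bᵀ * Lam * B).PosSemidef := by
      have heq : (b * t) • (1 : Matrix (Fin l) (Fin l) ℝ) - Bᵀ * Lam * B =
          (b • (Bᵀ * B) - Bᵀ * Lam * B) + b • (t • 1 - Bᵀ * B) := by
        rw [smul_sub, smul_smul]
        abel
      rw [heq]
      exact h2.add h5
    refine csSup_le (hspecA2 ▸ Set.range_nonempty _) fun μ hμ => ?_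
    rw [hspecA2] at hμ
    obtain ⟨i, rfl⟩ := hμ
    exact eig_le_of_psd hAH h6 i

end
end

section
/- For every K_n, every spline degree p, and every index set α ⊆ {1,…,K_n+p−2}, all eigenvalues of Ξ_αF_αF_αᵀ are positive reals and 1/3 ≤ λ_min(Ξ_αF_αF_αᵀ) ≤ λ_max(Ξ_αF_αF_αᵀ) ≤ 1. -/
open Matrix

noncomputable section

/-- The row sums `η_j` of `F_α`. -/
def etaRow (m : ℕ) (α : Finset (Fin (m - 2))) (j : Fin (freeSet m α).card) : ℝ :=
  ∑ t : Fin m, Fmat m α j t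

/-- The diagonal matrix `Ξ_α = diag(η₁⁻¹,…,η_ℓ⁻¹)`. -/
def XiMat (m : ℕ) (α : Finset (Fin (m - 2))) :
    Matrix (Fin (freeSet m α).card) (Fin (freeSet m α).card) ℝ :=
  Matrix.diagonal fun j => (etaRow m α j)⁻¹

section
open Finset



namespace Spline

variable (m : ℕ) (α : Finset (Fin (m - 2)))

lemma freeIdx_lt {j : ℕ} (h : j < (freeSet m α).card) : freeIdx m α j < m := by
  rw [freeIdx, dif_pos h]; exact (((freeSet m α).orderIsoOfFin rfl) ⟨j, h⟩).1.isLt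

lemma freeIdx_le (j : ℕ) : freeIdx m α j ≤ m := by
  by_cases h : j < (freeSet m α).card
  · exact (freeIdx_lt m α h).le
  · rw [freeIdx, dif_neg h]

lemma freeIdx_card : freeIdx m α (freeSet m α).card = m := by
  rw [freeIdx, dif_neg (lt_irrefl _)]

lemma freeIdx_strict {j k : ℕ} (hjk : j < k) (hk : k ≤ (freeSet m α).card) :
    freeIdx m α j < freeIdx m α k := by
  rcases eq_or_lt_of_le hk with rfl | hk'
  · rw [freeIdx_card]; exact freeIdx_lt m α (lt_of_lt_of_le hjk le_rfl)
  · have hj : j < (freeSet m α).card := hjk.trans hk'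
    rw [freeIdx, dif_pos hj, freeIdx, dif_pos hk']
    have := ((freeSet m α).orderIsoOfFin rfl).strictMono
      (show (⟨j, hj⟩ : Fin _) < ⟨k, hk'⟩ from hjk)
    exact this

lemma freeIdx_mono : Monotone (freeIdx m α) := by
  intro j k hjk
  rcases eq_or_lt_of_le hjk with rfl | h
  · exact le_rfl
  · by_cases hk : k ≤ (freeSet m α).card
    · exact (freeIdx_strict m α h hk).le
    · have hk' : freeIdx m α k = m := by rw [freeIdx, dif_neg (by omega)]
      rw [hk']; exact freeIdx_le m α j

lemma exists_freeIdx_of_mem {t : Fin m} (ht : t ∈ freeSet m α) :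
    ∃ j < (freeSet m α).card, freeIdx m α j = t.val := by
  obtain ⟨j, hj⟩ := ((freeSet m α).orderIsoOfFin rfl).surjective ⟨t, ht⟩
  exact ⟨j.1, j.2, by rw [freeIdx, dif_pos j.2]; simp [Fin.eta, hj]⟩

lemma zero_mem_freeSet (hm : 0 < m) : (⟨0, hm⟩ : Fin m) ∈ freeSet m α := by
  simp [freeSet]

lemma last_mem_freeSet (hm : 0 < m) : (⟨m - 1, by omega⟩ : Fin m) ∈ freeSet m α := by
  simp only [freeSet, mem_filter, mem_univ, true_and]
  intro i _
  have := i.isLt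
  omega

lemma card_pos (hm : 0 < m) : 0 < (freeSet m α).card :=
  Finset.card_pos.mpr ⟨_, zero_mem_freeSet m α hm⟩

lemma freeIdx_zero (hm : 0 < m) : freeIdx m α 0 = 0 := by
  obtain ⟨j, hj, hje⟩ := exists_freeIdx_of_mem m α (zero_mem_freeSet m α hm)
  simp only [] at hje
  have := freeIdx_mono m α (Nat.zero_le j)
  omega

lemma freeIdx_last (hm : 0 < m) : freeIdx m α ((freeSet m α).card - 1) = m - 1 := by
  obtain ⟨j, hj, hje⟩ := exists_freeIdx_of_mem m α (last_mem_freeSet m α hm)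
  have h1 := freeIdx_mono m α (show j ≤ (freeSet m α).card - 1 by omega)
  have h2 := freeIdx_lt m α (show (freeSet m α).card - 1 < (freeSet m α).card by
    have := card_pos m α hm; omega)
  simp only [hje] at h1 ⊢
  omega

lemma not_free_of_between {j t : ℕ} (hj : j < (freeSet m α).card)
    (h1 : freeIdx m α j < t) (h2 : t < freeIdx m α (j + 1)) :
    ∀ k < (freeSet m α).card, freeIdx m α k ≠ t := by
  intro k hk heq
  rcases le_or_gt k j with h | h
  · have := freeIdx_mono m α h; omega
  · have := freeIdx_mono m α (show j + 1 ≤ k by omega); omega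

lemma exists_block (hm : 0 < m) {t : ℕ} (ht : t < m) :
    ∃ j < (freeSet m α).card, freeIdx m α j ≤ t ∧ t < freeIdx m α (j + 1) := by
  set L := (freeSet m α).card with hL
  have hL0 : 0 < L := card_pos m α hm
  set P : ℕ → Prop := fun j => freeIdx m α j ≤ t with hP
  have hP0 : P 0 := by rw [hP]; simp [freeIdx_zero m α hm]
  classical
  set j := Nat.findGreatest P (L - 1) with hj
  have hjle : j ≤ L - 1 := Nat.findGreatest_le _
  have hjP : P j := Nat.findGreatest_spec (Nat.zero_le _) hP0
  refine ⟨j, by omega, hjP, ?_⟩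
  by_contra hcon
  push_neg at hcon
  have hPj1 : P (j + 1) := hcon
  by_cases hc : j + 1 ≤ L - 1
  · exact Nat.findGreatest_is_greatest (Nat.lt_succ_self j) hc hPj1
  · have hj1 : j + 1 = L := by omega
    rw [hP] at hPj1
    have hcard : freeIdx m α L = m := by rw [hL]; exact freeIdx_card m α
    rw [hj1] at hPj1
    omega

end Spline

namespace Spline

variable (m : ℕ) (α : Finset (Fin (m - 2)))

lemma Fmat_nonneg (j : Fin (freeSet m α).card) (t : Fin m) : 0 ≤ Fmat m α j t := by
  unfold Fmat
  split_ifs with h1 h2 h3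
  · norm_num
  · have ha : (freeIdx m α j.val : ℝ) < (t.val : ℝ) := by exact_mod_cast h2.1
    have hb : (t.val : ℝ) < (freeIdx m α (j.val + 1) : ℝ) := by exact_mod_cast h2.2
    apply div_nonneg <;> linarith
  · have ha : (freeIdx m α (j.val - 1) : ℝ) < (t.val : ℝ) := by exact_mod_cast h3.2.1
    have hb : (t.val : ℝ) < (freeIdx m α j.val : ℝ) := by exact_mod_cast h3.2.2
    apply div_nonneg <;> linarith
  · exact le_refl 0

lemma Fmat_free (j k : Fin (freeSet m α).card) :
    Fmat m α k ⟨freeIdx m α j.val, freeIdx_lt m α j.isLt⟩ = if k = j then 1 else 0 := by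
  have hmono := freeIdx_mono m α
  by_cases hkj : k = j
  · subst hkj
    simp [Fmat]
  · rw [if_neg hkj]
    have hne : k.val ≠ j.val := fun h => hkj (Fin.ext h)
    have hinj : freeIdx m α j.val ≠ freeIdx m α k.val := by
      rcases lt_or_gt_of_ne hne with h | h
      · exact (freeIdx_strict m α h j.isLt.le).ne'
      · exact (freeIdx_strict m α h k.isLt.le).ne
    have hc2 : ¬(freeIdx m α k.val < freeIdx m α j.val ∧
        freeIdx m α j.val < freeIdx m α (k.val + 1)) := by
      rintro ⟨h1, h2⟩
      rcases le_or_gt j.val k.val with h | h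
      · have := hmono h; omega
      · have := hmono (show k.val + 1 ≤ j.val by omega); omega
    have hc3 : ¬(0 < k.val ∧ freeIdx m α (k.val - 1) < freeIdx m α j.val ∧
        freeIdx m α j.val < freeIdx m α k.val) := by
      rintro ⟨hk0, h1, h2⟩
      rcases le_or_gt k.val j.val with h | h
      · have := hmono h; omega
      · have := hmono (show j.val ≤ k.val - 1 by omega); omega
    unfold Fmat
    rw [if_neg hinj, if_neg hc2, if_neg hc3]

lemma Fmat_interior {j : ℕ} (hj : j < (freeSet m α).card) {t : Fin m}
    (h1 : freeIdx m α j < t.val) (h2 : t.val < freeIdx m α (j + 1))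
    (k : Fin (freeSet m α).card) :
    Fmat m α k t =
      if k.val = j then
        ((freeIdx m α (j + 1) : ℝ) - (t.val : ℝ)) /
          ((freeIdx m α (j + 1) : ℝ) - (freeIdx m α j : ℝ))
      else if k.val = j + 1 then
        ((t.val : ℝ) - (freeIdx m α j : ℝ)) /
          ((freeIdx m α (j + 1) : ℝ) - (freeIdx m α j : ℝ))
      else 0 := by
  have hmono := freeIdx_mono m α
  have hfree := not_free_of_between m α hj h1 h2
  have hb1 : ¬ t.val = freeIdx m α k.val := fun h => hfree k.val k.isLt h.symm
  by_cases hkj : k.val = j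
  · unfold Fmat
    rw [if_neg hb1, if_pos (by rw [hkj]; exact ⟨h1, h2⟩), if_pos hkj, hkj]
  · by_cases hkj1 : k.val = j + 1
    · have hc2 : ¬(freeIdx m α k.val < t.val ∧ t.val < freeIdx m α (k.val + 1)) := by
        rintro ⟨ha, hb⟩
        rw [hkj1] at ha
        omega
      have hc3 : 0 < k.val ∧ freeIdx m α (k.val - 1) < t.val ∧ t.val < freeIdx m α k.val := by
        refine ⟨by omega, ?_, by rw [hkj1]; exact h2⟩
        rw [hkj1]
        simpa using h1
      unfold Fmat
      rw [if_neg hb1, if_neg hc2, if_pos hc3, if_neg hkj, if_pos hkj1, hkj1]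
      norm_num
    · have hc2 : ¬(freeIdx m α k.val < t.val ∧ t.val < freeIdx m α (k.val + 1)) := by
        rintro ⟨ha, hb⟩
        rcases le_or_gt k.val j with h | h
        · have := hmono (show k.val + 1 ≤ j by omega); omega
        · have := hmono (show j + 1 ≤ k.val by omega); omega
      have hc3 : ¬(0 < k.val ∧ freeIdx m α (k.val - 1) < t.val ∧ t.val < freeIdx m α k.val) := by
        rintro ⟨hk0, ha, hb⟩
        rcases le_or_gt k.val j with h | h
        · have := hmono h; omega
        · have := hmono (show j + 1 ≤ k.val - 1 by omega); omega
      unfold Fmat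
      rw [if_neg hb1, if_neg hc2, if_neg hc3, if_neg hkj, if_neg hkj1]

end Spline

namespace Spline

lemma sum_aff (u v : ℝ) (n : ℕ) :
    ∑ i ∈ Finset.range n, (u + v * i) = n * u + v * (n * (n - 1) / 2) := by
  induction n with
  | zero => simp
  | succ k ih =>
    rw [Finset.sum_range_succ, ih]
    push_cast
    ring

lemma sum_sq_aff (u v : ℝ) (n : ℕ) :
    ∑ i ∈ Finset.range n, (u + v * i) ^ 2 =
      n * u ^ 2 + u * v * (n * (n - 1)) + v ^ 2 * (n * (n - 1) * (2 * n - 1) / 6) := by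
  induction n with
  | zero => simp
  | succ k ih =>
    rw [Finset.sum_range_succ, ih]
    push_cast
    ring

lemma block_key (n : ℕ) (X Y : ℝ) :
    ∑ i ∈ Finset.range n,
        (((n : ℝ) - i) / ((n : ℝ) + 1) * X ^ 2 + ((i : ℝ) + 1) / ((n : ℝ) + 1) * Y ^ 2)
      ≤ 3 * ∑ i ∈ Finset.range n,
          (((n : ℝ) - i) / ((n : ℝ) + 1) * X + ((i : ℝ) + 1) / ((n : ℝ) + 1) * Y) ^ 2
        + X ^ 2 + Y ^ 2 := by
  have hD : (0 : ℝ) < (n : ℝ) + 1 := by positivity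
  have e1 : ∑ i ∈ Finset.range n,
      (((n : ℝ) - i) / ((n : ℝ) + 1) * X + ((i : ℝ) + 1) / ((n : ℝ) + 1) * Y) ^ 2
      = (∑ i ∈ Finset.range n, (((n : ℝ) * X + Y) + (Y - X) * i) ^ 2) / ((n : ℝ) + 1) ^ 2 := by
    rw [Finset.sum_div]
    refine Finset.sum_congr rfl fun i _ => ?_
    field_simp
    ring
  have e2 : ∑ i ∈ Finset.range n,
      (((n : ℝ) - i) / ((n : ℝ) + 1) * X ^ 2 + ((i : ℝ) + 1) / ((n : ℝ) + 1) * Y ^ 2)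
      = (∑ i ∈ Finset.range n, (((n : ℝ) * X ^ 2 + Y ^ 2) + (Y ^ 2 - X ^ 2) * i)) / ((n : ℝ) + 1) := by
    rw [Finset.sum_div]
    refine Finset.sum_congr rfl fun i _ => ?_
    field_simp
    ring
  rw [e1, e2, sum_aff, sum_sq_aff]
  have key : 3 * ((n * ((n : ℝ) * X + Y) ^ 2 + ((n : ℝ) * X + Y) * (Y - X) * (n * ((n : ℝ) - 1))
        + (Y - X) ^ 2 * ((n : ℝ) * ((n : ℝ) - 1) * (2 * (n : ℝ) - 1) / 6)) / ((n : ℝ) + 1) ^ 2)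
        + X ^ 2 + Y ^ 2
      - ((n : ℝ) * ((n : ℝ) * X ^ 2 + Y ^ 2) + (Y ^ 2 - X ^ 2) * ((n : ℝ) * ((n : ℝ) - 1) / 2))
          / ((n : ℝ) + 1)
      = ((n : ℝ) + 1) * (X + Y) ^ 2 / 2 + (X - Y) ^ 2 / (2 * ((n : ℝ) + 1)) := by
    field_simp
    ring
  have t1 : (0 : ℝ) ≤ ((n : ℝ) + 1) * (X + Y) ^ 2 / 2 := by positivity
  have t2 : (0 : ℝ) ≤ (X - Y) ^ 2 / (2 * ((n : ℝ) + 1)) := by positivity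
  linarith [key]

lemma jensen_sq {ι : Type*} [Fintype ι] (w x : ι → ℝ) (hw : ∀ k, 0 ≤ w k)
    (hsum : ∑ k, w k = 1) : (∑ k, w k * x k) ^ 2 ≤ ∑ k, w k * x k ^ 2 := by
  have hcs := Finset.sum_mul_sq_le_sq_mul_sq Finset.univ
    (fun k => Real.sqrt (w k)) (fun k => Real.sqrt (w k) * x k)
  have h1 : ∀ k : ι, Real.sqrt (w k) * (Real.sqrt (w k) * x k) = w k * x k := fun k => by
    rw [← mul_assoc, Real.mul_self_sqrt (hw k)]
  have h2 : ∀ k : ι, Real.sqrt (w k) ^ 2 = w k := fun k => Real.sq_sqrt (hw k)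
  have h3 : ∀ k : ι, (Real.sqrt (w k) * x k) ^ 2 = w k * x k ^ 2 := fun k => by
    rw [mul_pow, h2]
  rw [Finset.sum_congr rfl fun k _ => h1 k, Finset.sum_congr rfl fun k _ => h2 k,
    Finset.sum_congr rfl fun k _ => h3 k, hsum, one_mul] at hcs
  exact hcs

lemma convex_sq {c1 c2 X Y : ℝ} (h1 : 0 ≤ c1) (h2 : 0 ≤ c2) (h : c1 + c2 = 1) :
    (c1 * X + c2 * Y) ^ 2 ≤ c1 * X ^ 2 + c2 * Y ^ 2 := by
  nlinarith [mul_nonneg (mul_nonneg h1 h2) (sq_nonneg (X - Y))]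

lemma telescope (g : ℕ → ℕ) (hg : Monotone g) (f : ℕ → ℝ) (N : ℕ) :
    ∑ j ∈ Finset.range N, ∑ t ∈ Finset.Ico (g j) (g (j + 1)), f t
      = ∑ t ∈ Finset.Ico (g 0) (g N), f t := by
  induction N with
  | zero => simp
  | succ n ih =>
    rw [Finset.sum_range_succ, ih,
      Finset.sum_Ico_consecutive _ (hg (Nat.zero_le n)) (hg (Nat.le_succ n))]

end Spline

namespace Spline

variable (m : ℕ) (α : Finset (Fin (m - 2)))

/-- column of `Fmat` at a free coordinate dotted with a vector. -/
lemma col_free (j : Fin (freeSet m α).card) (z : Fin (freeSet m α).card → ℝ) :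
    ∑ k, Fmat m α k ⟨freeIdx m α j.val, freeIdx_lt m α j.isLt⟩ * z k = z j := by
  rw [Finset.sum_congr rfl fun k _ => by rw [Fmat_free m α j k]]
  simp [ite_mul]

lemma col_interior {j : ℕ} (hj : j < (freeSet m α).card) (hj1 : j + 1 < (freeSet m α).card)
    {t : Fin m} (h1 : freeIdx m α j < t.val) (h2 : t.val < freeIdx m α (j + 1))
    (z : Fin (freeSet m α).card → ℝ) :
    ∑ k, Fmat m α k t * z k =
      ((freeIdx m α (j + 1) : ℝ) - (t.val : ℝ)) /
          ((freeIdx m α (j + 1) : ℝ) - (freeIdx m α j : ℝ)) * z ⟨j, hj⟩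
      + ((t.val : ℝ) - (freeIdx m α j : ℝ)) /
          ((freeIdx m α (j + 1) : ℝ) - (freeIdx m α j : ℝ)) * z ⟨j + 1, hj1⟩ := by
  classical
  set j₀ : Fin (freeSet m α).card := ⟨j, hj⟩
  set j₁ : Fin (freeSet m α).card := ⟨j + 1, hj1⟩
  have hne : j₀ ≠ j₁ := by
    intro h
    have := congrArg Fin.val h
    simp [j₀, j₁] at this
  rw [Finset.sum_congr rfl fun k _ => by rw [Fmat_interior m α hj h1 h2 k]]
  rw [← Finset.sum_subset (Finset.subset_univ ({j₀, j₁} : Finset _)) ?_]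
  · rw [Finset.sum_pair hne]
    have hJ0 : (j₀ : ℕ) = j := rfl
    have hJ1 : (j₁ : ℕ) = j + 1 := rfl
    rw [hJ0, hJ1, if_pos rfl, if_neg (by omega : ¬(j + 1 = j)), if_pos rfl]
  · intro k _ hk
    simp only [Finset.mem_insert, Finset.mem_singleton] at hk
    push_neg at hk
    have hk1 : ¬ (k.val = j) := fun h => hk.1 (Fin.ext h)
    have hk2 : ¬ (k.val = j + 1) := fun h => hk.2 (Fin.ext h)
    rw [if_neg hk1, if_neg hk2, zero_mul]

lemma block_last (hm : 0 < m) {j : ℕ} (hj : j < (freeSet m α).card)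
    (hj1 : ¬ j + 1 < (freeSet m α).card) :
    Finset.Ioo (freeIdx m α j) (freeIdx m α (j + 1)) = ∅ := by
  have hL : j + 1 = (freeSet m α).card := by omega
  have h1 : freeIdx m α j = m - 1 := by
    have := freeIdx_last m α hm
    rw [show (freeSet m α).card - 1 = j by omega] at this
    exact this
  have h2 : freeIdx m α (j + 1) = m := by rw [hL]; exact freeIdx_card m α
  apply Finset.eq_empty_of_forall_notMem
  intro t ht
  rw [Finset.mem_Ioo] at ht
  omega

lemma Fmat_colsum (hm : 0 < m) (t : Fin m) : ∑ k, Fmat m α k t = 1 := by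
  obtain ⟨j, hj, hle, hlt⟩ := exists_block m α hm t.isLt
  have hcs : ∀ k, Fmat m α k t = Fmat m α k t * (fun _ => (1:ℝ)) k := fun k => by simp
  rw [Finset.sum_congr rfl fun k _ => hcs k]
  rcases eq_or_lt_of_le hle with heq | hlt2
  · have ht : t = ⟨freeIdx m α (⟨j, hj⟩ : Fin (freeSet m α).card).val,
        freeIdx_lt m α (⟨j, hj⟩ : Fin (freeSet m α).card).isLt⟩ := Fin.ext heq.symm
    rw [ht, col_free]
  · have hj1 : j + 1 < (freeSet m α).card := by
      by_contra hj1
      have := block_last m α hm hj hj1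
      have hmem : t.val ∈ Finset.Ioo (freeIdx m α j) (freeIdx m α (j + 1)) :=
        Finset.mem_Ioo.mpr ⟨hlt2, hlt⟩
      rw [this] at hmem
      exact absurd hmem (Finset.notMem_empty _)
    rw [col_interior m α hj hj1 hlt2 hlt]
    have hab : (freeIdx m α j : ℝ) < (freeIdx m α (j + 1) : ℝ) := by
      exact_mod_cast freeIdx_strict m α (Nat.lt_succ_self j) hj1.le
    field_simp
    rw [div_eq_one_iff_eq (by linarith : (freeIdx m α (j + 1) : ℝ) - (freeIdx m α j : ℝ) ≠ 0)]
    ring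

lemma etaRow_pos (j : Fin (freeSet m α).card) : 0 < etaRow m α j := by
  have h1 : Fmat m α j ⟨freeIdx m α j.val, freeIdx_lt m α j.isLt⟩ = 1 := by
    rw [Fmat_free m α j j, if_pos rfl]
  have h2 := Finset.single_le_sum (f := fun t => Fmat m α j t)
    (fun t _ => Fmat_nonneg m α j t)
    (Finset.mem_univ (⟨freeIdx m α j.val, freeIdx_lt m α j.isLt⟩ : Fin m))
  rw [h1] at h2
  unfold etaRow
  linarith

/-- Upper quadratic-form bound. -/
lemma qf_upper (hm : 0 < m) (x : Fin (freeSet m α).card → ℝ) :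
    ∑ t : Fin m, (∑ k, Fmat m α k t * x k) ^ 2
      ≤ ∑ t : Fin m, ∑ k, Fmat m α k t * x k ^ 2 := by
  apply Finset.sum_le_sum
  intro t _
  exact jensen_sq (fun k => Fmat m α k t) x (fun k => Fmat_nonneg m α k t)
    (Fmat_colsum m α hm t)

end Spline

namespace Spline

variable (m : ℕ) (α : Finset (Fin (m - 2)))

lemma sum_fin_blocks (hm : 0 < m) (f : ℕ → ℝ) :
    ∑ t : Fin m, f t.val
      = ∑ j ∈ Finset.range (freeSet m α).card,
          ∑ t ∈ Finset.Ico (freeIdx m α j) (freeIdx m α (j + 1)), f t := by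
  rw [telescope (freeIdx m α) (freeIdx_mono m α) f, freeIdx_zero m α hm, freeIdx_card,
    ← Finset.range_eq_Ico, ← Fin.sum_univ_eq_sum_range]

lemma qf_lower (hm : 0 < m) (x : Fin (freeSet m α).card → ℝ) :
    ∑ t : Fin m, ∑ k, Fmat m α k t * x k ^ 2
      ≤ 3 * ∑ t : Fin m, (∑ k, Fmat m α k t * x k) ^ 2 := by
  classical
  set xn : ℕ → ℝ := fun j => if h : j < (freeSet m α).card then x ⟨j, h⟩ else 0 with hxn
  set Qn : ℕ → ℝ := fun t => if h : t < m then (∑ k, Fmat m α k ⟨t, h⟩ * x k) else 0 with hQn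
  set Rn : ℕ → ℝ := fun t => if h : t < m then (∑ k, Fmat m α k ⟨t, h⟩ * x k ^ 2) else 0 with hRn
  have hsplit : ∀ j ∈ Finset.range (freeSet m α).card, ∀ f : ℕ → ℝ,
      ∑ t ∈ Finset.Ico (freeIdx m α j) (freeIdx m α (j + 1)), f t
        = f (freeIdx m α j) + ∑ t ∈ Finset.Ioo (freeIdx m α j) (freeIdx m α (j + 1)), f t := by
    intro j hj f
    rw [Finset.mem_range] at hj
    have hab : freeIdx m α j < freeIdx m α (j + 1) :=
      freeIdx_strict m α (Nat.lt_succ_self j) (by omega)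
    rw [← Finset.Ioo_insert_left hab, Finset.sum_insert Finset.left_notMem_Ioo]
  have hQfree : ∀ j (hj : j < (freeSet m α).card), Qn (freeIdx m α j) = xn j := by
    intro j hj
    simp only [hQn, hxn]
    rw [dif_pos (freeIdx_lt m α hj), dif_pos hj]
    exact col_free m α ⟨j, hj⟩ x
  have hRfree : ∀ j (hj : j < (freeSet m α).card), Rn (freeIdx m α j) = xn j ^ 2 := by
    intro j hj
    simp only [hRn, hxn]
    rw [dif_pos (freeIdx_lt m α hj), dif_pos hj]
    exact col_free m α ⟨j, hj⟩ (fun k => x k ^ 2)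
  have hQsum : ∑ t : Fin m, (∑ k, Fmat m α k t * x k) ^ 2
      = ∑ j ∈ Finset.range (freeSet m α).card,
          ((xn j) ^ 2 + ∑ t ∈ Finset.Ioo (freeIdx m α j) (freeIdx m α (j + 1)), (Qn t) ^ 2) := by
    calc ∑ t : Fin m, (∑ k, Fmat m α k t * x k) ^ 2
        = ∑ t : Fin m, Qn t.val ^ 2 := by
          refine Finset.sum_congr rfl fun t _ => ?_
          simp only [hQn]
          rw [dif_pos t.isLt, Fin.eta]
      _ = ∑ j ∈ Finset.range (freeSet m α).card,
            ∑ t ∈ Finset.Ico (freeIdx m α j) (freeIdx m α (j + 1)), Qn t ^ 2 :=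
          sum_fin_blocks m α hm (fun u => Qn u ^ 2)
      _ = ∑ j ∈ Finset.range (freeSet m α).card,
            ((xn j) ^ 2 + ∑ t ∈ Finset.Ioo (freeIdx m α j) (freeIdx m α (j + 1)), (Qn t) ^ 2) := by
          refine Finset.sum_congr rfl fun j hj => ?_
          rw [hsplit j hj (fun u => Qn u ^ 2), hQfree j (Finset.mem_range.mp hj)]
  have hRsum : ∑ t : Fin m, ∑ k, Fmat m α k t * x k ^ 2
      = ∑ j ∈ Finset.range (freeSet m α).card,
          ((xn j) ^ 2 + ∑ t ∈ Finset.Ioo (freeIdx m α j) (freeIdx m α (j + 1)), Rn t) := by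
    calc ∑ t : Fin m, ∑ k, Fmat m α k t * x k ^ 2
        = ∑ t : Fin m, Rn t.val := by
          refine Finset.sum_congr rfl fun t _ => ?_
          simp only [hRn]
          rw [dif_pos t.isLt, Fin.eta]
      _ = ∑ j ∈ Finset.range (freeSet m α).card,
            ∑ t ∈ Finset.Ico (freeIdx m α j) (freeIdx m α (j + 1)), Rn t :=
          sum_fin_blocks m α hm Rn
      _ = ∑ j ∈ Finset.range (freeSet m α).card,
            ((xn j) ^ 2 + ∑ t ∈ Finset.Ioo (freeIdx m α j) (freeIdx m α (j + 1)), Rn t) := by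
          refine Finset.sum_congr rfl fun j hj => ?_
          rw [hsplit j hj Rn, hRfree j (Finset.mem_range.mp hj)]
  have hblock : ∀ j ∈ Finset.range (freeSet m α).card,
      ∑ t ∈ Finset.Ioo (freeIdx m α j) (freeIdx m α (j + 1)), Rn t
        ≤ 3 * ∑ t ∈ Finset.Ioo (freeIdx m α j) (freeIdx m α (j + 1)), (Qn t) ^ 2
            + (xn j) ^ 2 + (xn (j + 1)) ^ 2 := by
    intro j hjr
    have hjL : j < (freeSet m α).card := Finset.mem_range.mp hjr
    by_cases hj1 : j + 1 < (freeSet m α).card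
    · have hab : freeIdx m α j < freeIdx m α (j + 1) :=
        freeIdx_strict m α (Nat.lt_succ_self j) (by omega)
      have hbm : freeIdx m α (j + 1) < m := freeIdx_lt m α hj1
      set a := freeIdx m α j with ha
      set b := freeIdx m α (j + 1) with hb
      set n := b - (a + 1) with hn
      have hbeq : b = a + 1 + n := by omega
      rw [← Finset.Ico_add_one_left_eq_Ioo, Finset.sum_Ico_eq_sum_range, Finset.sum_Ico_eq_sum_range]
      have hbr : (b : ℝ) = (a : ℝ) + 1 + (n : ℝ) := by rw [hbeq]; push_cast; ring
      have hQi : ∀ i ∈ Finset.range (b - (a + 1)), (Qn (a + 1 + i)) ^ 2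
          = (((n : ℝ) - i) / ((n : ℝ) + 1) * xn j
              + ((i : ℝ) + 1) / ((n : ℝ) + 1) * xn (j + 1)) ^ 2 := by
        intro i hi
        rw [Finset.mem_range] at hi
        have hin : i < n := by omega
        have htm : a + 1 + i < m := by omega
        simp only [hQn]
        rw [dif_pos htm]
        have h1 : freeIdx m α j < ((⟨a + 1 + i, htm⟩ : Fin m)).val := by
          show a < a + 1 + i; omega
        have h2 : ((⟨a + 1 + i, htm⟩ : Fin m)).val < freeIdx m α (j + 1) := by
          show a + 1 + i < b; omega
        rw [col_interior m α hjL hj1 h1 h2 x]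
        simp only [hxn]
        rw [dif_pos hjL, dif_pos hj1]
        congr 1
        rw [show (freeIdx m α (j + 1) : ℝ) = (a : ℝ) + 1 + (n : ℝ) from hbr]
        show ((a : ℝ) + 1 + n - ((a + 1 + i : ℕ) : ℝ)) / ((a : ℝ) + 1 + n - (a : ℝ)) * x ⟨j, hjL⟩
            + (((a + 1 + i : ℕ) : ℝ) - (a : ℝ)) / ((a : ℝ) + 1 + n - (a : ℝ)) * x ⟨j + 1, hj1⟩ = _
        push_cast
        ring
      have hRi : ∀ i ∈ Finset.range (b - (a + 1)), Rn (a + 1 + i)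
          = ((n : ℝ) - i) / ((n : ℝ) + 1) * xn j ^ 2
            + ((i : ℝ) + 1) / ((n : ℝ) + 1) * xn (j + 1) ^ 2 := by
        intro i hi
        rw [Finset.mem_range] at hi
        have hin : i < n := by omega
        have htm : a + 1 + i < m := by omega
        simp only [hRn]
        rw [dif_pos htm]
        have h1 : freeIdx m α j < ((⟨a + 1 + i, htm⟩ : Fin m)).val := by
          show a < a + 1 + i; omega
        have h2 : ((⟨a + 1 + i, htm⟩ : Fin m)).val < freeIdx m α (j + 1) := by
          show a + 1 + i < b; omega
        rw [col_interior m α hjL hj1 h1 h2 (fun k => x k ^ 2)]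
        simp only [hxn]
        rw [dif_pos hjL, dif_pos hj1]
        rw [show (freeIdx m α (j + 1) : ℝ) = (a : ℝ) + 1 + (n : ℝ) from hbr]
        show ((a : ℝ) + 1 + n - ((a + 1 + i : ℕ) : ℝ)) / ((a : ℝ) + 1 + n - (a : ℝ)) * x ⟨j, hjL⟩ ^ 2
            + (((a + 1 + i : ℕ) : ℝ) - (a : ℝ)) / ((a : ℝ) + 1 + n - (a : ℝ)) * x ⟨j + 1, hj1⟩ ^ 2 = _
        push_cast
        ring
      rw [Finset.sum_congr rfl hQi, Finset.sum_congr rfl hRi]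
      rw [show b - (a + 1) = n from rfl]
      exact block_key n (xn j) (xn (j + 1))
    · rw [block_last m α hm hjL hj1]
      simp only [Finset.sum_empty]
      positivity
  have hshift : ∑ j ∈ Finset.range (freeSet m α).card, (xn (j + 1)) ^ 2
      ≤ ∑ j ∈ Finset.range (freeSet m α).card, (xn j) ^ 2 := by
    have h0 := Finset.sum_range_succ' (fun j => (xn j) ^ 2) (freeSet m α).card
    have h1 := Finset.sum_range_succ (fun j => (xn j) ^ 2) (freeSet m α).card
    have h2 : xn (freeSet m α).card = 0 := by
      simp only [hxn]; rw [dif_neg (lt_irrefl _)]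
    simp only [h2] at h1
    nlinarith [sq_nonneg (xn 0)]
  have hS1 := Finset.sum_le_sum hblock
  rw [hRsum, hQsum, Finset.sum_add_distrib, Finset.sum_add_distrib]
  rw [Finset.sum_add_distrib, Finset.sum_add_distrib, ← Finset.mul_sum] at hS1
  rw [mul_add]
  linarith
end Spline

namespace Spline

lemma exists_eigen {𝕜 : Type*} [Field 𝕜] {n : Type*} [Fintype n] [DecidableEq n]
    (A : Matrix n n 𝕜) {μ : 𝕜} (h : μ ∈ spectrum 𝕜 A) :
    ∃ v : n → 𝕜, v ≠ 0 ∧ A *ᵥ v = μ • v := by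
  have h' : μ ∈ spectrum 𝕜 (Matrix.toLinAlgEquiv' A) := by
    rw [AlgEquiv.spectrum_eq Matrix.toLinAlgEquiv' A]
    exact h
  have heig : Module.End.HasEigenvalue (Matrix.toLinAlgEquiv' A) μ :=
    Module.End.hasEigenvalue_iff_mem_spectrum.mpr h'
  obtain ⟨v, hv⟩ := heig.exists_hasEigenvector
  refine ⟨v, hv.right, ?_⟩
  have := hv.apply_eq_smul
  rw [show (Matrix.toLinAlgEquiv' A : Module.End 𝕜 (n → 𝕜)) v = A *ᵥ v from rfl] at this
  exact this

lemma quad_split {n : Type*} [Fintype n] (B : Matrix n n ℝ) (a b : n → ℝ) :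
    ∑ j, ∑ k, B j k * (a j * a k + b j * b k)
      = a ⬝ᵥ (B *ᵥ a) + b ⬝ᵥ (B *ᵥ b) := by
  simp only [dotProduct, Matrix.mulVec, Finset.mul_sum]
  rw [← Finset.sum_add_distrib]
  refine Finset.sum_congr rfl fun j _ => ?_
  rw [← Finset.sum_add_distrib]
  refine Finset.sum_congr rfl fun k _ => ?_
  ring

lemma herm_quad {n : Type*} [Fintype n] (B : Matrix n n ℝ) (hsym : ∀ j k, B j k = B k j)
    (v : n → ℂ) :
    ∑ j, (starRingEnd ℂ) (v j) * ((B.map (algebraMap ℝ ℂ)) *ᵥ v) j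
      = ((∑ j, ∑ k, B j k * ((v j).re * (v k).re + (v j).im * (v k).im) : ℝ) : ℂ) := by
  have hL : ∀ j, (starRingEnd ℂ) (v j) * ((B.map (algebraMap ℝ ℂ)) *ᵥ v) j
      = ∑ k, (starRingEnd ℂ) (v j) * (((B j k : ℝ) : ℂ) * v k) := by
    intro j
    simp only [Matrix.mulVec, dotProduct, Matrix.map_apply, Finset.mul_sum]
    refine Finset.sum_congr rfl fun k _ => ?_
    norm_cast
  rw [Finset.sum_congr rfl fun j _ => hL j]
  have hre : ∀ j k, ((starRingEnd ℂ) (v j) * (((B j k : ℝ) : ℂ) * v k)).re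
      = B j k * ((v j).re * (v k).re + (v j).im * (v k).im) := by
    intro j k
    simp [Complex.mul_re, Complex.mul_im]
    ring
  have him : ∀ j k, ((starRingEnd ℂ) (v j) * (((B j k : ℝ) : ℂ) * v k)).im
      = B j k * ((v j).re * (v k).im - (v j).im * (v k).re) := by
    intro j k
    simp [Complex.mul_re, Complex.mul_im]
    ring
  apply Complex.ext
  · rw [Complex.re_sum, Complex.ofReal_re]
    refine Finset.sum_congr rfl fun j _ => ?_
    rw [Complex.re_sum]
    exact Finset.sum_congr rfl fun k _ => hre j k
  · rw [Complex.im_sum, Complex.ofReal_im]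
    have : ∑ j, (∑ k, (starRingEnd ℂ) (v j) * (((B j k : ℝ) : ℂ) * v k)).im
        = ∑ j, ∑ k, B j k * ((v j).re * (v k).im - (v j).im * (v k).re) := by
      refine Finset.sum_congr rfl fun j _ => ?_
      rw [Complex.im_sum]
      exact Finset.sum_congr rfl fun k _ => him j k
    rw [this]
    have h1 : ∑ j, ∑ k, B j k * ((v j).re * (v k).im)
        = ∑ j, ∑ k, B j k * ((v j).im * (v k).re) := by
      rw [Finset.sum_comm]
      refine Finset.sum_congr rfl fun k _ => Finset.sum_congr rfl fun j _ => ?_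
      rw [hsym k j]
      ring
    have h2 : ∑ j, ∑ k, B j k * ((v j).re * (v k).im - (v j).im * (v k).re)
        = (∑ j, ∑ k, B j k * ((v j).re * (v k).im))
          - ∑ j, ∑ k, B j k * ((v j).im * (v k).re) := by
      rw [← Finset.sum_sub_distrib]
      refine Finset.sum_congr rfl fun j _ => ?_
      rw [← Finset.sum_sub_distrib]
      exact Finset.sum_congr rfl fun k _ => by ring
    rw [h2, h1, sub_self]

end Spline

namespace Spline

variable (m : ℕ) (α : Finset (Fin (m - 2)))

lemma Fsym : ∀ j k, (Fmat m α * (Fmat m α)ᵀ) j k = (Fmat m α * (Fmat m α)ᵀ) k j := by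
  intro j k
  simp only [Matrix.mul_apply, Matrix.transpose_apply]
  exact Finset.sum_congr rfl fun t _ => mul_comm _ _

lemma Dsym : ∀ j k, (Matrix.diagonal (etaRow m α)) j k = (Matrix.diagonal (etaRow m α)) k j := by
  intro j k
  by_cases h : j = k
  · rw [h]
  · rw [Matrix.diagonal_apply_ne _ h, Matrix.diagonal_apply_ne _ (Ne.symm h)]

lemma qM_eq (x : Fin (freeSet m α).card → ℝ) :
    x ⬝ᵥ ((Fmat m α * (Fmat m α)ᵀ) *ᵥ x) = ∑ t : Fin m, (∑ k, Fmat m α k t * x k) ^ 2 := by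
  rw [← Matrix.mulVec_mulVec, Matrix.dotProduct_mulVec]
  simp only [Matrix.vecMul, Matrix.mulVec, dotProduct, Matrix.transpose_apply]
  refine Finset.sum_congr rfl fun t _ => ?_
  rw [sq]
  congr 1
  exact Finset.sum_congr rfl fun k _ => mul_comm _ _

lemma qD_eq (x : Fin (freeSet m α).card → ℝ) :
    x ⬝ᵥ ((Matrix.diagonal (etaRow m α)) *ᵥ x)
      = ∑ t : Fin m, ∑ k, Fmat m α k t * x k ^ 2 := by
  simp only [dotProduct, Matrix.mulVec_diagonal]
  have h : ∀ j, x j * (etaRow m α j * x j) = ∑ t : Fin m, Fmat m α j t * x j ^ 2 := by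
    intro j
    unfold etaRow
    rw [Finset.sum_mul, Finset.mul_sum]
    exact Finset.sum_congr rfl fun t _ => by ring
  rw [Finset.sum_congr rfl fun j _ => h j, Finset.sum_comm]

lemma qD_nonneg (x : Fin (freeSet m α).card → ℝ) :
    0 ≤ x ⬝ᵥ (Matrix.diagonal (etaRow m α) *ᵥ x) := by
  simp only [dotProduct, Matrix.mulVec_diagonal]
  apply Finset.sum_nonneg
  intro j _
  have := etaRow_pos m α j
  nlinarith [sq_nonneg (x j)]

lemma qD_pos (x : Fin (freeSet m α).card → ℝ) (hx : x ≠ 0) :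
    0 < x ⬝ᵥ (Matrix.diagonal (etaRow m α) *ᵥ x) := by
  obtain ⟨j₀, hj₀⟩ := Function.ne_iff.mp hx
  simp only [dotProduct, Matrix.mulVec_diagonal]
  apply Finset.sum_pos'
  · intro j _
    have := etaRow_pos m α j
    nlinarith [sq_nonneg (x j)]
  · refine ⟨j₀, Finset.mem_univ _, ?_⟩
    have h1 := etaRow_pos m α j₀
    have h2 : 0 < x j₀ * x j₀ := mul_self_pos.mpr hj₀
    nlinarith

lemma qf_bounds (hm : 0 < m) (x : Fin (freeSet m α).card → ℝ) :
    x ⬝ᵥ ((Fmat m α * (Fmat m α)ᵀ) *ᵥ x) ≤ x ⬝ᵥ (Matrix.diagonal (etaRow m α) *ᵥ x) ∧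
    x ⬝ᵥ (Matrix.diagonal (etaRow m α) *ᵥ x)
      ≤ 3 * (x ⬝ᵥ ((Fmat m α * (Fmat m α)ᵀ) *ᵥ x)) := by
  rw [qM_eq, qD_eq]
  exact ⟨qf_upper m α hm x, qf_lower m α hm x⟩

lemma DXi_eq_one : Matrix.diagonal (etaRow m α) * XiMat m α = 1 := by
  unfold XiMat
  rw [Matrix.diagonal_mul_diagonal, ← Matrix.diagonal_one]
  exact congrArg Matrix.diagonal (funext fun j => mul_inv_cancel₀ (etaRow_pos m α j).ne')

lemma DXi_eq_one_C :
    (Matrix.diagonal (etaRow m α)).map (algebraMap ℝ ℂ)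
      * (XiMat m α).map (algebraMap ℝ ℂ) = 1 := by
  unfold XiMat
  rw [Matrix.diagonal_map (map_zero _), Matrix.diagonal_map (map_zero _),
    Matrix.diagonal_mul_diagonal, ← Matrix.diagonal_one]
  refine congrArg Matrix.diagonal (funext fun j => ?_)
  simp only [Complex.coe_algebraMap, Complex.ofReal_inv]
  exact mul_inv_cancel₀ (Complex.ofReal_ne_zero.mpr (etaRow_pos m α j).ne')

lemma spec_real_subset (hm : 0 < m) :
    spectrum ℝ (XiMat m α * Fmat m α * (Fmat m α)ᵀ) ⊆ Set.Icc (1/3 : ℝ) 1 := by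
  intro μ hμ
  rw [Matrix.mul_assoc] at hμ
  obtain ⟨v, hv0, hveq⟩ := exists_eigen _ hμ
  have hMv : (Fmat m α * (Fmat m α)ᵀ) *ᵥ v
      = μ • (Matrix.diagonal (etaRow m α) *ᵥ v) := by
    have h := congrArg (fun w => Matrix.diagonal (etaRow m α) *ᵥ w) hveq
    simp only [Matrix.mulVec_mulVec] at h
    rw [← Matrix.mul_assoc, DXi_eq_one m α, Matrix.one_mul] at h
    rw [h, Matrix.mulVec_smul]
  have hdot := congrArg (fun w => v ⬝ᵥ w) hMv
  simp only [dotProduct_smul, smul_eq_mul] at hdot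
  obtain ⟨hub, hlb⟩ := qf_bounds m α hm v
  have hpos := qD_pos m α v hv0
  constructor
  · nlinarith
  · nlinarith

lemma spec_complex (hm : 0 < m) {μ : ℂ}
    (hμ : μ ∈ spectrum ℂ ((XiMat m α * Fmat m α * (Fmat m α)ᵀ).map (algebraMap ℝ ℂ))) :
    μ.im = 0 ∧ 1/3 ≤ μ.re ∧ μ.re ≤ 1 := by
  rw [Matrix.mul_assoc, Matrix.map_mul] at hμ
  obtain ⟨v, hv0, hveq⟩ := exists_eigen _ hμ
  have hMv : ((Fmat m α * (Fmat m α)ᵀ).map (algebraMap ℝ ℂ)) *ᵥ v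
      = μ • ((Matrix.diagonal (etaRow m α)).map (algebraMap ℝ ℂ) *ᵥ v) := by
    have h := congrArg
      (fun w => (Matrix.diagonal (etaRow m α)).map (algebraMap ℝ ℂ) *ᵥ w) hveq
    simp only [Matrix.mulVec_mulVec] at h
    rw [← Matrix.mul_assoc, DXi_eq_one_C m α, Matrix.one_mul] at h
    rw [h, Matrix.mulVec_smul]
  have hsum : ∑ j, (starRingEnd ℂ) (v j)
        * (((Fmat m α * (Fmat m α)ᵀ).map (algebraMap ℝ ℂ)) *ᵥ v) j
      = μ * ∑ j, (starRingEnd ℂ) (v j)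
        * (((Matrix.diagonal (etaRow m α)).map (algebraMap ℝ ℂ)) *ᵥ v) j := by
    rw [hMv, Finset.mul_sum]
    refine Finset.sum_congr rfl fun j _ => ?_
    simp only [Pi.smul_apply, smul_eq_mul]
    ring
  rw [herm_quad (Fmat m α * (Fmat m α)ᵀ) (Fsym m α) v,
    herm_quad (Matrix.diagonal (etaRow m α)) (Dsym m α) v,
    quad_split, quad_split] at hsum
  set a : Fin (freeSet m α).card → ℝ := fun j => (v j).re with ha
  set b : Fin (freeSet m α).card → ℝ := fun j => (v j).im with hb
  have hab0 : a ≠ 0 ∨ b ≠ 0 := by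
    by_contra hcon
    push_neg at hcon
    apply hv0
    funext j
    have h1 : (v j).re = 0 := by
      have := congrFun hcon.1 j; simpa [ha] using this
    have h2 : (v j).im = 0 := by
      have := congrFun hcon.2 j; simpa [hb] using this
    exact Complex.ext (by simpa using h1) (by simpa using h2)
  obtain ⟨hua, hla⟩ := qf_bounds m α hm a
  obtain ⟨hub, hlb⟩ := qf_bounds m α hm b
  have hna := qD_nonneg m α a
  have hnb := qD_nonneg m α b
  have hQDpos : 0 < a ⬝ᵥ (Matrix.diagonal (etaRow m α) *ᵥ a)
      + b ⬝ᵥ (Matrix.diagonal (etaRow m α) *ᵥ b) := by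
    rcases hab0 with h | h
    · have := qD_pos m α a h; linarith
    · have := qD_pos m α b h; linarith
  set QM : ℝ := a ⬝ᵥ ((Fmat m α * (Fmat m α)ᵀ) *ᵥ a)
      + b ⬝ᵥ ((Fmat m α * (Fmat m α)ᵀ) *ᵥ b) with hQM
  set QD : ℝ := a ⬝ᵥ (Matrix.diagonal (etaRow m α) *ᵥ a)
      + b ⬝ᵥ (Matrix.diagonal (etaRow m α) *ᵥ b) with hQD
  have hQDne : ((QD : ℝ) : ℂ) ≠ 0 := Complex.ofReal_ne_zero.mpr hQDpos.ne'
  have hμeq : μ = ((QM / QD : ℝ) : ℂ) := by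
    rw [Complex.ofReal_div, eq_div_iff hQDne]
    exact hsum.symm
  refine ⟨by rw [hμeq]; exact Complex.ofReal_im _, ?_, ?_⟩
  · rw [hμeq, Complex.ofReal_re, le_div_iff₀ hQDpos]
    linarith
  · rw [hμeq, Complex.ofReal_re, div_le_one hQDpos]
    linarith

lemma spec_nonempty (hm : 0 < m) :
    (spectrum ℝ (XiMat m α * Fmat m α * (Fmat m α)ᵀ)).Nonempty := by
  classical
  set E : Matrix (Fin (freeSet m α).card) (Fin (freeSet m α).card) ℝ :=
    Matrix.diagonal (fun j => (Real.sqrt (etaRow m α j))⁻¹) with hE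
  set E' : Matrix (Fin (freeSet m α).card) (Fin (freeSet m α).card) ℝ :=
    Matrix.diagonal (fun j => Real.sqrt (etaRow m α j)) with hE'
  have hsqrt_ne : ∀ j, Real.sqrt (etaRow m α j) ≠ 0 :=
    fun j => (Real.sqrt_pos.mpr (etaRow_pos m α j)).ne'
  have hEE' : E * E' = 1 := by
    rw [hE, hE', Matrix.diagonal_mul_diagonal, ← Matrix.diagonal_one]
    exact congrArg Matrix.diagonal (funext fun j => inv_mul_cancel₀ (hsqrt_ne j))
  have hE'E : E' * E = 1 := by
    rw [hE, hE', Matrix.diagonal_mul_diagonal, ← Matrix.diagonal_one]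
    exact congrArg Matrix.diagonal (funext fun j => mul_inv_cancel₀ (hsqrt_ne j))
  set u : (Matrix (Fin (freeSet m α).card) (Fin (freeSet m α).card) ℝ)ˣ :=
    ⟨E, E', hEE', hE'E⟩ with hu
  set S := E * (Fmat m α * (Fmat m α)ᵀ) * E with hS
  have hEE : E * E = XiMat m α := by
    rw [hE, Matrix.diagonal_mul_diagonal]
    unfold XiMat
    refine congrArg Matrix.diagonal (funext fun j => ?_)
    rw [← mul_inv, Real.mul_self_sqrt (etaRow_pos m α j).le]
  have hconj : (↑u : Matrix _ _ ℝ) * S * (↑u⁻¹ : Matrix _ _ ℝ)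
      = XiMat m α * Fmat m α * (Fmat m α)ᵀ := by
    have hval : (↑u : Matrix _ _ ℝ) = E := rfl
    have hinv : (↑u⁻¹ : Matrix _ _ ℝ) = E' := rfl
    rw [hval, hinv, hS]
    calc E * (E * (Fmat m α * (Fmat m α)ᵀ) * E) * E'
        = (E * E) * (Fmat m α * (Fmat m α)ᵀ) * (E * E') := by
          simp only [Matrix.mul_assoc]
      _ = XiMat m α * Fmat m α * (Fmat m α)ᵀ := by
          rw [hEE, hEE', Matrix.mul_one, Matrix.mul_assoc]
  have hspec : spectrum ℝ (XiMat m α * Fmat m α * (Fmat m α)ᵀ) = spectrum ℝ S := by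
    rw [← hconj]
    exact spectrum.units_conjugate
  have h1 : (Fmat m α * (Fmat m α)ᵀ)ᵀ = Fmat m α * (Fmat m α)ᵀ := by
    rw [Matrix.transpose_mul, Matrix.transpose_transpose]
  have hEt : Eᵀ = E := by rw [hE, Matrix.diagonal_transpose]
  have hST : S.IsHermitian := by
    rw [Matrix.IsHermitian, Matrix.conjTranspose_eq_transpose_of_trivial, hS]
    rw [Matrix.transpose_mul, Matrix.transpose_mul, h1, hEt]
    simp only [Matrix.mul_assoc]
  have hev := hST.eigenvalues_mem_spectrum_real ⟨0, card_pos m α hm⟩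
  rw [hspec]
  exact ⟨_, hev⟩

end Spline

end

/-- Proposition 6.2.  For every `K_n`, spline degree `p` and index set `α`,
all eigenvalues of `Ξ_α F_α F_αᵀ` are positive reals and
`1/3 ≤ λ_min(Ξ_α F_α F_αᵀ) ≤ λ_max(Ξ_α F_α F_αᵀ) ≤ 1`. -/
theorem stmt5 (K p : ℕ) (hK : 0 < K) (α : Finset (Fin (K + p - 2))) :
    (∀ μ ∈ spectrum ℂ
        ((XiMat (K + p) α * Fmat (K + p) α * (Fmat (K + p) α)ᵀ).map (algebraMap ℝ ℂ)),
        μ.im = 0 ∧ 0 < μ.re) ∧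
    1 / 3 ≤ sInf (spectrum ℝ (XiMat (K + p) α * Fmat (K + p) α * (Fmat (K + p) α)ᵀ)) ∧
    sInf (spectrum ℝ (XiMat (K + p) α * Fmat (K + p) α * (Fmat (K + p) α)ᵀ)) ≤
      sSup (spectrum ℝ (XiMat (K + p) α * Fmat (K + p) α * (Fmat (K + p) α)ᵀ)) ∧
    sSup (spectrum ℝ (XiMat (K + p) α * Fmat (K + p) α * (Fmat (K + p) α)ᵀ)) ≤ 1 := by
  have hm : 0 < K + p := by omega
  have hsub := Spline.spec_real_subset (K + p) α hm
  have hne := Spline.spec_nonempty (K + p) α hm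
  have hba : BddAbove (spectrum ℝ (XiMat (K + p) α * Fmat (K + p) α * (Fmat (K + p) α)ᵀ)) :=
    BddAbove.mono hsub bddAbove_Icc
  have hbb : BddBelow (spectrum ℝ (XiMat (K + p) α * Fmat (K + p) α * (Fmat (K + p) α)ᵀ)) :=
    BddBelow.mono hsub bddBelow_Icc
  refine ⟨fun μ hμ => ?_, le_csInf hne fun x hx => (hsub hx).1,
    csInf_le_csSup hne hbb hba, csSup_le hne fun x hx => (hsub hx).2⟩
  obtain ⟨h1, h2, _⟩ := Spline.spec_complex (K + p) α hm hμ
  exact ⟨h1, by linarith⟩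

end
end
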